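/- arXiv:2508.00845 — 7 statements merged into one kernel-verified Lean document; each statement's English description precedes it below -/
import Mathlib

section
/- Let a, b, e be vectors in a complex inner product space H with ‖e‖ = 1, let α ∈ ℂ with α ≠ 0, and let β ≥ 0. Then |⟨a,e⟩·⟨e,b⟩|² ≤ ((β + (β+1)·max{1, |α−1|²}) / (|α|²(β+1)))·‖a‖²‖b‖² + ((1 + 2(β+1)·max{1, |α−1|}) / (|α|²(β+1)))·‖a‖‖b‖·|⟨a,b⟩|. -/
set_option maxHeartbeats 1000000 in
/-- Extended Buzano inequality with parameters `α ∈ ℂ \ {0}` and `β ≥ 0`. -/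
theorem extended_buzano {H : Type*} [NormedAddCommGroup H] [InnerProductSpace ℂ H]
    (a b e : H) (he : ‖e‖ = 1) (α : ℂ) (hα : α ≠ 0) (β : ℝ) (hβ : 0 ≤ β) :
    ‖(inner ℂ a e : ℂ) * (inner ℂ e b : ℂ)‖ ^ 2 ≤
      (β + (β + 1) * max 1 (‖α - 1‖ ^ 2)) / (‖α‖ ^ 2 * (β + 1)) * (‖a‖ ^ 2 * ‖b‖ ^ 2)
        + (1 + 2 * (β + 1) * max 1 ‖α - 1‖) / (‖α‖ ^ 2 * (β + 1))
            * (‖a‖ * ‖b‖ * ‖(inner ℂ a b : ℂ)‖) := by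
  set A : ℝ := ‖a‖ * ‖b‖ with hA
  set s : ℝ := ‖(inner ℂ a b : ℂ)‖ with hs
  set M : ℝ := max 1 ‖α - 1‖ with hM
  have hM1 : 1 ≤ M := le_max_left _ _
  have hM0 : 0 ≤ M := by linarith
  have hα1 : ‖α - 1‖ ≤ M := le_max_right _ _
  have hMsq : max 1 (‖α - 1‖ ^ 2) = M ^ 2 := by
    rcases le_total ‖α - 1‖ 1 with h | h
    · rw [hM, max_eq_left h, max_eq_left, one_pow]
      nlinarith [norm_nonneg (α - 1)]
    · rw [hM, max_eq_right h, max_eq_right]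
      nlinarith
  have hsA : s ≤ A := norm_inner_le_norm a b
  have hA0 : 0 ≤ A := by positivity
  have hs0 : 0 ≤ s := norm_nonneg _
  set t : ℂ := inner ℂ e b with ht
  have htb : ‖t‖ ≤ ‖b‖ := by
    have := norm_inner_le_norm (𝕜 := ℂ) e b
    simpa [he, ← ht] using this
  set v : H := (α * t) • e - b with hv
  have hinner : (inner ℂ a v : ℂ) = α * inner ℂ a e * t - inner ℂ a b := by
    simp [hv, inner_sub_right, inner_smul_right]; ring
  have hnormα1 : ‖α - 1‖ ^ 2 = ‖α‖ ^ 2 - 2 * α.re + 1 := by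
    have h1 : ‖α - 1‖ ^ 2 = Complex.normSq (α - 1) := by
      rw [Complex.sq_norm]
    have h2 : ‖α‖ ^ 2 = Complex.normSq α := by
      rw [Complex.sq_norm]
    rw [h1, h2]
    simp [Complex.normSq_apply]
    ring
  have hvsq : ‖v‖ ^ 2 = (‖α - 1‖ ^ 2 - 1) * ‖t‖ ^ 2 + ‖b‖ ^ 2 := by
    have h0 : ‖v‖ ^ 2 = ‖(α * t) • e‖ ^ 2
        - 2 * Complex.re (inner ℂ ((α * t) • e) b) + ‖b‖ ^ 2 := by
      rw [hv]; exact norm_sub_sq (𝕜 := ℂ) _ _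
    have h1 : ‖(α * t) • e‖ ^ 2 = ‖α‖ ^ 2 * ‖t‖ ^ 2 := by
      rw [norm_smul, he]
      simp [mul_pow]
    have h2 : (inner ℂ ((α * t) • e) b : ℂ) = (starRingEnd ℂ) (α * t) * t := by
      rw [inner_smul_left, ← ht]
    have h3 : Complex.re ((starRingEnd ℂ) (α * t) * t) = α.re * ‖t‖ ^ 2 := by
      have : (starRingEnd ℂ) (α * t) * t = (starRingEnd ℂ) α * ((starRingEnd ℂ) t * t) := by
        rw [map_mul]; ring
      rw [this]
      have h4 : (starRingEnd ℂ) t * t = (Complex.normSq t : ℂ) := by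
        rw [mul_comm, Complex.mul_conj]
      rw [h4]
      have h5 : Complex.normSq t = ‖t‖ ^ 2 := by
        rw [Complex.sq_norm]
      simp [Complex.mul_re, h5, ← Complex.ofReal_pow]
    rw [h0, h1, h2, h3, hnormα1]
    ring
  have hvM : ‖v‖ ≤ M * ‖b‖ := by
    have hsq : ‖v‖ ^ 2 ≤ (M * ‖b‖) ^ 2 := by
      rcases le_total ‖α - 1‖ 1 with h | h
      · have h6 : ‖α - 1‖ ^ 2 ≤ 1 := by nlinarith [norm_nonneg (α - 1)]
        have h7 : (0:ℝ) ≤ (1 - ‖α - 1‖ ^ 2) * ‖t‖ ^ 2 :=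
          mul_nonneg (by linarith) (sq_nonneg _)
        have h8 : (0:ℝ) ≤ (M ^ 2 - 1) * ‖b‖ ^ 2 :=
          mul_nonneg (by nlinarith) (sq_nonneg _)
        nlinarith [h7, h8]
      · have h6 : ‖t‖ ^ 2 ≤ ‖b‖ ^ 2 := by nlinarith [norm_nonneg t]
        have h7 : (0:ℝ) ≤ (‖α - 1‖ ^ 2 - 1) * (‖b‖ ^ 2 - ‖t‖ ^ 2) :=
          mul_nonneg (by nlinarith [norm_nonneg (α - 1)]) (by linarith)
        have h8 : ‖α - 1‖ ^ 2 ≤ M ^ 2 := by nlinarith [norm_nonneg (α - 1)]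
        have h9 : (0:ℝ) ≤ (M ^ 2 - ‖α - 1‖ ^ 2) * ‖b‖ ^ 2 :=
          mul_nonneg (by linarith) (sq_nonneg _)
        nlinarith [h7, h9]
    have hMb : (0:ℝ) ≤ M * ‖b‖ := by positivity
    exact (pow_le_pow_iff_left₀ (norm_nonneg v) hMb (by norm_num)).mp hsq
  have key : ‖α * (inner ℂ a e : ℂ) * t - (inner ℂ a b : ℂ)‖ ≤ M * A := by
    calc ‖α * (inner ℂ a e : ℂ) * t - (inner ℂ a b : ℂ)‖ = ‖(inner ℂ a v : ℂ)‖ := by rw [hinner]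
    _ ≤ ‖a‖ * ‖v‖ := norm_inner_le_norm a v
    _ ≤ ‖a‖ * (M * ‖b‖) := by
        exact mul_le_mul_of_nonneg_left hvM (norm_nonneg a)
    _ = M * A := by rw [hA]; ring
  set p : ℝ := ‖(inner ℂ a e : ℂ) * (inner ℂ e b : ℂ)‖ with hp
  have hp0 : 0 ≤ p := norm_nonneg _
  have hP : ‖α‖ * p ≤ M * A + s := by
    have h1 : ‖α‖ * p = ‖α * (inner ℂ a e : ℂ) * t‖ := by
      rw [hp, ht, ← norm_mul]; ring_nf
    calc ‖α‖ * p = ‖α * (inner ℂ a e : ℂ) * t - (inner ℂ a b : ℂ) + (inner ℂ a b : ℂ)‖ := by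
          rw [h1]; ring_nf
    _ ≤ ‖α * (inner ℂ a e : ℂ) * t - (inner ℂ a b : ℂ)‖ + ‖(inner ℂ a b : ℂ)‖ := norm_add_le _ _
    _ ≤ M * A + s := by exact add_le_add key le_rfl
  have hP2 : (‖α‖ * p) ^ 2 ≤ (M * A + s) ^ 2 := by
    have h0 : 0 ≤ ‖α‖ * p := by positivity
    exact pow_le_pow_left₀ h0 hP 2
  have hc : (0:ℝ) < ‖α‖ ^ 2 * (β + 1) := by
    have : 0 < ‖α‖ := norm_pos_iff.mpr hα
    positivity
  have hselem : (β + 1) * s ^ 2 ≤ β * A ^ 2 + A * s := by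
    nlinarith [mul_nonneg (sub_nonneg.mpr hsA) (by positivity : (0:ℝ) ≤ (β + 1) * s + β * A)]
  rw [div_mul_eq_mul_div, div_mul_eq_mul_div, ← add_div, le_div_iff₀ hc, hMsq]
  have hAab : ‖a‖ ^ 2 * ‖b‖ ^ 2 = A ^ 2 := by rw [hA]; ring
  rw [hAab]
  have h1 : (β + 1) * (‖α‖ * p) ^ 2 ≤ (β + 1) * (M * A + s) ^ 2 :=
    mul_le_mul_of_nonneg_left hP2 (by linarith)
  nlinarith [h1, hselem]
end

section
/- Let a, b, e be vectors in a complex inner product space H with ‖e‖ = 1, and let β ≥ 0. Then |⟨a,e⟩·⟨e,b⟩|² ≤ (1/4)·( ((2β+1)/(β+1))·‖a‖²‖b‖² + ((2β+3)/(β+1))·‖a‖‖b‖·|⟨a,b⟩| ). -/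
/-- Buzano's inequality. -/
lemma buzano {H : Type*} [NormedAddCommGroup H] [InnerProductSpace ℂ H]
    (a b e : H) (he : ‖e‖ = 1) :
    ‖(inner ℂ a e : ℂ) * (inner ℂ e b : ℂ)‖ ≤ (‖a‖ * ‖b‖ + ‖(inner ℂ a b : ℂ)‖) / 2 := by
  set c : ℂ := 2 * inner ℂ e a with hc
  have hvec : (inner ℂ (c • e - a) b : ℂ) = 2 * (inner ℂ a e * inner ℂ e b) - inner ℂ a b := by
    rw [inner_sub_left, inner_smul_left]
    simp [hc, map_mul, map_ofNat, inner_conj_symm]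
    ring
  have hz : (inner ℂ a e : ℂ) * inner ℂ e a = ((‖(inner ℂ e a : ℂ)‖ ^ 2 : ℝ) : ℂ) := by
    rw [← inner_conj_symm a e, RCLike.conj_mul]
    norm_cast
  have hnorm : ‖c • e - a‖ ^ 2 = ‖a‖ ^ 2 := by
    have h1 : (inner ℂ (c • e) a : ℂ) = ((2 * ‖(inner ℂ e a : ℂ)‖ ^ 2 : ℝ) : ℂ) := by
      rw [inner_smul_left, hc, map_mul, map_ofNat, inner_conj_symm, mul_assoc, hz]
      norm_cast
    have h2 : ‖c • e‖ ^ 2 = 4 * ‖(inner ℂ e a : ℂ)‖ ^ 2 := by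
      rw [norm_smul, he, mul_one, hc]
      simp [norm_mul]
      ring
    have h3 := @norm_sub_sq ℂ _ _ _ _ (c • e) a
    rw [h2, h1] at h3
    simp [← Complex.ofReal_pow] at h3
    linarith
  have key : ‖(2 : ℂ) * (inner ℂ a e * inner ℂ e b) - inner ℂ a b‖ ≤ ‖a‖ * ‖b‖ := by
    rw [← hvec]
    calc ‖(inner ℂ (c • e - a) b : ℂ)‖ ≤ ‖c • e - a‖ * ‖b‖ := norm_inner_le_norm _ _
    _ = ‖a‖ * ‖b‖ := by
        have : ‖c • e - a‖ = ‖a‖ := by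
          have := hnorm
          nlinarith [norm_nonneg (c • e - a), norm_nonneg a]
        rw [this]
  have h2L : (2:ℝ) * ‖(inner ℂ a e : ℂ) * (inner ℂ e b : ℂ)‖ ≤ ‖a‖ * ‖b‖ + ‖(inner ℂ a b : ℂ)‖ := by
    have e1 : ‖(2:ℂ) * (inner ℂ a e * inner ℂ e b)‖ = 2 * ‖(inner ℂ a e : ℂ) * (inner ℂ e b : ℂ)‖ := by
      rw [norm_mul]; norm_num
    have e2 : ‖(2:ℂ) * (inner ℂ a e * inner ℂ e b)‖ ≤
        ‖(2 : ℂ) * (inner ℂ a e * inner ℂ e b) - inner ℂ a b‖ + ‖(inner ℂ a b : ℂ)‖ := by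
      calc ‖(2:ℂ) * (inner ℂ a e * inner ℂ e b)‖
          = ‖((2 : ℂ) * (inner ℂ a e * inner ℂ e b) - inner ℂ a b) + inner ℂ a b‖ := by
            rw [sub_add_cancel]
        _ ≤ _ := norm_add_le _ _
    linarith [e1 ▸ e2, key]
  linarith

/-- Buzano-type inequality with parameter `β ≥ 0`. -/
theorem buzano_beta {H : Type*} [NormedAddCommGroup H] [InnerProductSpace ℂ H]
    (a b e : H) (he : ‖e‖ = 1) (β : ℝ) (hβ : 0 ≤ β) :
    ‖(inner ℂ a e : ℂ) * (inner ℂ e b : ℂ)‖ ^ 2 ≤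
      1 / 4 * ((2 * β + 1) / (β + 1) * (‖a‖ ^ 2 * ‖b‖ ^ 2)
        + (2 * β + 3) / (β + 1) * (‖a‖ * ‖b‖ * ‖(inner ℂ a b : ℂ)‖)) := by
  have hbuz := buzano a b e he
  set L := ‖(inner ℂ a e : ℂ) * (inner ℂ e b : ℂ)‖ with hL
  set x := ‖a‖ * ‖b‖ with hx
  set t := ‖(inner ℂ a b : ℂ)‖ with ht
  have htx : t ≤ x := norm_inner_le_norm a b
  have ht0 : 0 ≤ t := norm_nonneg _
  have hL0 : 0 ≤ L := norm_nonneg _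
  have hβ1 : (0:ℝ) < β + 1 := by linarith
  have hrhs : 1 / 4 * ((2 * β + 1) / (β + 1) * (‖a‖ ^ 2 * ‖b‖ ^ 2)
        + (2 * β + 3) / (β + 1) * (x * t))
      = ((2 * β + 1) * x ^ 2 + (2 * β + 3) * (x * t)) / (4 * (β + 1)) := by
    rw [hx]; field_simp
  rw [show ‖a‖ ^ 2 * ‖b‖ ^ 2 = x^2 by rw [hx]; ring] at hrhs ⊢
  rw [show ‖a‖ * ‖b‖ * t = x * t from rfl, hrhs, le_div_iff₀ (by positivity)]
  nlinarith [mul_nonneg (sub_nonneg.2 htx) (by positivity : (0:ℝ) ≤ β * x + (β + 1) * t),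
    mul_self_le_mul_self hL0 hbuz, sq_nonneg (x + t)]
end

section
/- Let a, b, e be vectors in a complex inner product space H with ‖e‖ = 1, let α ∈ ℂ with α ≠ 0, and let β ≥ 0. Then |⟨a,e⟩·⟨e,b⟩|² ≤ ((2(β+1)·max{1, |α−1|²} + 2β) / (|α|²(β+1)))·‖a‖²‖b‖² + (2 / (|α|²(β+1)))·|⟨a,b⟩|². -/
/-- Extended Buzano inequality, squared form, with parameters `α ∈ ℂ \ {0}` and `β ≥ 0`. -/
theorem extended_buzano_sq {H : Type*} [NormedAddCommGroup H] [InnerProductSpace ℂ H]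
    (a b e : H) (he : ‖e‖ = 1) (α : ℂ) (hα : α ≠ 0) (β : ℝ) (hβ : 0 ≤ β) :
    ‖(inner ℂ a e : ℂ) * (inner ℂ e b : ℂ)‖ ^ 2 ≤
      (2 * (β + 1) * max 1 (‖α - 1‖ ^ 2) + 2 * β) / (‖α‖ ^ 2 * (β + 1))
          * (‖a‖ ^ 2 * ‖b‖ ^ 2)
        + 2 / (‖α‖ ^ 2 * (β + 1)) * ‖(inner ℂ a b : ℂ)‖ ^ 2 := by
  set P : ℂ := inner ℂ a e * inner ℂ e b with hPdef
  set t : ℂ := inner ℂ e a with htdef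
  set c : ℂ := (starRingEnd ℂ) α * t with hcdef
  set v : H := a - c • e with hvdef
  set M : ℝ := max 1 (‖α - 1‖ ^ 2) with hMdef
  -- identity: ⟨v, b⟩ = ⟨a, b⟩ - α * P
  have hid : (inner ℂ v b : ℂ) = inner ℂ a b - α * P := by
    simp only [hvdef, inner_sub_left, inner_smul_left, hcdef, hPdef, htdef]
    rw [← inner_conj_symm a e]
    simp
    ring
  -- norm bound step 1
  have h1 : ‖α * P‖ ≤ ‖(inner ℂ a b : ℂ)‖ + ‖v‖ * ‖b‖ := by
    have : α * P = inner ℂ a b - inner ℂ v b := by rw [hid]; ring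
    rw [this]
    calc ‖(inner ℂ a b : ℂ) - inner ℂ v b‖ ≤ ‖(inner ℂ a b : ℂ)‖ + ‖(inner ℂ v b : ℂ)‖ :=
          norm_sub_le _ _
      _ ≤ ‖(inner ℂ a b : ℂ)‖ + ‖v‖ * ‖b‖ := by
          gcongr; exact norm_inner_le_norm v b
  -- ‖v‖² = ‖a‖² + (‖α-1‖² - 1) * ‖t‖²
  have ht_le : ‖t‖ ≤ ‖a‖ := by
    calc ‖t‖ ≤ ‖e‖ * ‖a‖ := norm_inner_le_norm e a
      _ = ‖a‖ := by rw [he, one_mul]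
  have hvsq : ‖v‖ ^ 2 = ‖a‖ ^ 2 + (‖α - 1‖ ^ 2 - 1) * ‖t‖ ^ 2 := by
    have h2 : ‖v‖ ^ 2 = ‖a‖ ^ 2 - 2 * Complex.re (inner ℂ a (c • e) : ℂ) + ‖c • e‖ ^ 2 :=
      @norm_sub_sq ℂ _ _ _ _ a (c • e)
    have hae : (inner ℂ a e : ℂ) = (starRingEnd ℂ) t := by
      rw [htdef, inner_conj_symm]
    have h3 : (inner ℂ a (c • e) : ℂ) = (starRingEnd ℂ) α * (t * (starRingEnd ℂ) t) := by
      rw [inner_smul_right, hcdef, hae]; ring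
    have h4 : Complex.re (inner ℂ a (c • e) : ℂ) = α.re * ‖t‖ ^ 2 := by
      rw [h3, Complex.mul_conj, ← Complex.sq_norm]
      simp [Complex.mul_re, ← Complex.ofReal_pow]
    have h5 : ‖c • e‖ ^ 2 = ‖α‖ ^ 2 * ‖t‖ ^ 2 := by
      rw [norm_smul, he, mul_one, hcdef, norm_mul]
      simp [mul_pow]
    have h6 : ‖α - 1‖ ^ 2 = ‖α‖ ^ 2 - 2 * α.re + 1 := by
      rw [Complex.sq_norm, Complex.sq_norm]
      simp [Complex.normSq_apply, Complex.sub_re, Complex.sub_im]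
      ring
    rw [h2, h4, h5, h6]; ring
  have hvM : ‖v‖ ^ 2 ≤ M * ‖a‖ ^ 2 := by
    rcases le_or_gt (‖α - 1‖ ^ 2) 1 with h | h
    · have : ‖v‖ ^ 2 ≤ ‖a‖ ^ 2 := by
        rw [hvsq]; nlinarith [sq_nonneg ‖t‖]
      calc ‖v‖ ^ 2 ≤ ‖a‖ ^ 2 := this
        _ ≤ M * ‖a‖ ^ 2 := by
            have : (1:ℝ) ≤ M := le_max_left _ _
            nlinarith [sq_nonneg ‖a‖]
    · have hM : M = ‖α - 1‖ ^ 2 := max_eq_right h.le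
      rw [hvsq, hM]
      have ht2 : ‖t‖ ^ 2 ≤ ‖a‖ ^ 2 := by nlinarith [norm_nonneg t, norm_nonneg a]
      nlinarith [mul_nonneg (by linarith : (0:ℝ) ≤ ‖α - 1‖ ^ 2 - 1)
        (by linarith : (0:ℝ) ≤ ‖a‖ ^ 2 - ‖t‖ ^ 2)]
  -- squared bound
  have hX : ‖(inner ℂ a b : ℂ)‖ ^ 2 ≤ ‖a‖ ^ 2 * ‖b‖ ^ 2 := by
    have := @norm_inner_le_norm ℂ _ _ _ _ a b
    nlinarith [norm_nonneg (inner ℂ a b : ℂ), norm_nonneg a, norm_nonneg b]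
  have hsq : ‖α‖ ^ 2 * ‖P‖ ^ 2 ≤ 2 * M * (‖a‖ ^ 2 * ‖b‖ ^ 2) + 2 * ‖(inner ℂ a b : ℂ)‖ ^ 2 := by
    have h1' : ‖α‖ * ‖P‖ ≤ ‖(inner ℂ a b : ℂ)‖ + ‖v‖ * ‖b‖ := by
      rwa [← norm_mul]
    have hvb : (‖v‖ * ‖b‖) ^ 2 ≤ M * (‖a‖ ^ 2 * ‖b‖ ^ 2) := by
      have := hvM
      nlinarith [norm_nonneg v, norm_nonneg b, sq_nonneg ‖b‖]
    have hs : (‖α‖ * ‖P‖) ^ 2 ≤ (‖(inner ℂ a b : ℂ)‖ + ‖v‖ * ‖b‖) ^ 2 := by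
      have h0 : 0 ≤ ‖α‖ * ‖P‖ := by positivity
      nlinarith [h1', h0]
    rw [mul_pow] at hs
    nlinarith [hs, hvb, sq_nonneg (‖(inner ℂ a b : ℂ)‖ - ‖v‖ * ‖b‖)]
  -- final arithmetic
  have hαpos : 0 < ‖α‖ ^ 2 := by
    have : 0 < ‖α‖ := norm_pos_iff.2 hα
    positivity
  have hβ1 : 0 < β + 1 := by linarith
  have hden : 0 < ‖α‖ ^ 2 * (β + 1) := by positivity
  rw [div_mul_eq_mul_div, div_mul_eq_mul_div, ← add_div, le_div_iff₀ hden]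
  have hβY : β * ‖(inner ℂ a b : ℂ)‖ ^ 2 ≤ β * (‖a‖ ^ 2 * ‖b‖ ^ 2) :=
    mul_le_mul_of_nonneg_left hX hβ
  calc ‖P‖ ^ 2 * (‖α‖ ^ 2 * (β + 1)) = (β + 1) * (‖α‖ ^ 2 * ‖P‖ ^ 2) := by ring
    _ ≤ (β + 1) * (2 * M * (‖a‖ ^ 2 * ‖b‖ ^ 2) + 2 * ‖(inner ℂ a b : ℂ)‖ ^ 2) :=
        mul_le_mul_of_nonneg_left hsq hβ1.le
    _ = 2 * (β + 1) * M * (‖a‖ ^ 2 * ‖b‖ ^ 2) + 2 * ‖(inner ℂ a b : ℂ)‖ ^ 2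
          + 2 * (β * ‖(inner ℂ a b : ℂ)‖ ^ 2) := by ring
    _ ≤ 2 * (β + 1) * M * (‖a‖ ^ 2 * ‖b‖ ^ 2) + 2 * ‖(inner ℂ a b : ℂ)‖ ^ 2
          + 2 * (β * (‖a‖ ^ 2 * ‖b‖ ^ 2)) := by linarith
    _ = (2 * (β + 1) * M + 2 * β) * (‖a‖ ^ 2 * ‖b‖ ^ 2)
          + 2 * ‖(inner ℂ a b : ℂ)‖ ^ 2 := by ring
end

section
/- Let a, b, e be vectors in a complex inner product space H with ‖e‖ = 1, let α ∈ ℂ with α ≠ 0, let β ≥ 0, and let n be a natural number. Set λ₁ = (β + (β+1)·max{1, |α−1|²}) / (|α|²(β+1)) and λ₂ = (1 + 2(β+1)·max{1, |α−1|}) / (|α|²(β+1)). Then |⟨a,e⟩·⟨e,b⟩|^{2n} ≤ Σ_{k=0}^{n} C(n,k)·λ₁^{k}·λ₂^{n−k}·‖a‖^{2k}‖b‖^{2k}·‖a‖^{n−k}‖b‖^{n−k}·|⟨a,b⟩|^{n−k}, where C(n,k) is the binomial coefficient. -/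
open scoped ComplexConjugate

private lemma aux_orth {H : Type*} [NormedAddCommGroup H] [InnerProductSpace ℂ H]
    (v w : H) (h : (inner ℂ v w : ℂ) = 0) : ‖v + w‖ ^ 2 = ‖v‖ ^ 2 + ‖w‖ ^ 2 := by
  have := norm_add_sq_eq_norm_sq_add_norm_sq_of_inner_eq_zero v w h
  rw [sq, sq, sq, this]

private lemma aux_orth_smul {H : Type*} [NormedAddCommGroup H] [InnerProductSpace ℂ H]
    (c d : ℂ) (v w : H) (h : (inner ℂ v w : ℂ) = 0) :
    ‖c • v + d • w‖ ^ 2 = ‖c‖ ^ 2 * ‖v‖ ^ 2 + ‖d‖ ^ 2 * ‖w‖ ^ 2 := by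
  rw [aux_orth (c • v) (d • w) (by simp [inner_smul_left, inner_smul_right, h]),
    norm_smul, norm_smul, mul_pow, mul_pow]

/-- Extended Buzano: linear form. -/
private lemma aux_buzano {H : Type*} [NormedAddCommGroup H] [InnerProductSpace ℂ H]
    (a b e : H) (he : ‖e‖ = 1) (α : ℂ) (hα : α ≠ 0) :
    ‖(inner ℂ a e : ℂ) * (inner ℂ e b : ℂ)‖ ≤
      (max 1 ‖α - 1‖ * (‖a‖ * ‖b‖) + ‖(inner ℂ a b : ℂ)‖) / ‖α‖ := by
  have hr : (0:ℝ) < ‖α‖ := norm_pos_iff.2 hα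
  set v : H := (inner ℂ e b : ℂ) • e with hv_def
  set w : H := b - v with hw_def
  have hee : (inner ℂ e e : ℂ) = 1 := by
    rw [inner_self_eq_norm_sq_to_K, he]; norm_num
  have hew : (inner ℂ e w : ℂ) = 0 := by
    simp [hw_def, hv_def, inner_sub_right, inner_smul_right, hee, he]
  have hvw : (inner ℂ v w : ℂ) = 0 := by
    simp [hv_def, inner_smul_left, hew]
  have hbvw : b = v + w := by simp [hw_def]
  set x : H := (1 - α⁻¹) • v + (-α⁻¹) • w with hx_def
  have hx_sq : ‖x‖ ^ 2 = ‖(1:ℂ) - α⁻¹‖ ^ 2 * ‖v‖ ^ 2 + ‖α⁻¹‖ ^ 2 * ‖w‖ ^ 2 := by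
    rw [hx_def, aux_orth_smul _ _ _ _ hvw, norm_neg]
  have hb_sq : ‖b‖ ^ 2 = ‖v‖ ^ 2 + ‖w‖ ^ 2 := by
    rw [hbvw]; exact aux_orth v w hvw
  have h1a : ‖(1:ℂ) - α⁻¹‖ = ‖α - 1‖ / ‖α‖ := by
    have h : (1 : ℂ) - α⁻¹ = (α - 1) * α⁻¹ := by field_simp
    rw [h, norm_mul, norm_inv, div_eq_mul_inv]
  have h1b : ‖(α⁻¹ : ℂ)‖ = 1 / ‖α‖ := by rw [norm_inv, one_div]
  set m2 : ℝ := max 1 ‖α - 1‖ with hm2_def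
  have hm2_1 : 1 ≤ m2 := le_max_left _ _
  have hm2_t : ‖α - 1‖ ≤ m2 := le_max_right _ _
  have hx_le_sq : ‖x‖ ^ 2 ≤ (m2 * ‖b‖ / ‖α‖) ^ 2 := by
    rw [hx_sq, h1a, h1b]
    have h1 : (‖α - 1‖ / ‖α‖) ^ 2 ≤ (m2 / ‖α‖) ^ 2 := by
      apply pow_le_pow_left₀ (by positivity)
      exact div_le_div_of_nonneg_right hm2_t hr.le
    have h2 : ((1:ℝ) / ‖α‖) ^ 2 ≤ (m2 / ‖α‖) ^ 2 := by
      apply pow_le_pow_left₀ (by positivity)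
      exact div_le_div_of_nonneg_right hm2_1 hr.le
    calc (‖α - 1‖ / ‖α‖) ^ 2 * ‖v‖ ^ 2 + ((1:ℝ) / ‖α‖) ^ 2 * ‖w‖ ^ 2
        ≤ (m2 / ‖α‖) ^ 2 * ‖v‖ ^ 2 + (m2 / ‖α‖) ^ 2 * ‖w‖ ^ 2 := by
          gcongr <;> positivity
      _ = (m2 / ‖α‖) ^ 2 * ‖b‖ ^ 2 := by rw [hb_sq]; ring
      _ = (m2 * ‖b‖ / ‖α‖) ^ 2 := by ring
  have hx_le : ‖x‖ ≤ m2 * ‖b‖ / ‖α‖ := by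
    have h0 : (0:ℝ) ≤ m2 * ‖b‖ / ‖α‖ := by positivity
    nlinarith [norm_nonneg x]
  have hkey_id : (inner ℂ a e : ℂ) * (inner ℂ e b : ℂ)
      = (inner ℂ a x : ℂ) + α⁻¹ * (inner ℂ a b : ℂ) := by
    have hav : (inner ℂ a v : ℂ) = (inner ℂ e b : ℂ) * (inner ℂ a e : ℂ) := by
      simp [hv_def, inner_smul_right]
    have haw : (inner ℂ a w : ℂ) = (inner ℂ a b : ℂ) - (inner ℂ e b : ℂ) * (inner ℂ a e : ℂ) := by
      rw [hw_def, inner_sub_right, hav]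
    rw [hx_def, inner_add_right]
    simp only [inner_smul_right]
    rw [hav, haw]
    ring
  have h1 : ‖(inner ℂ a e : ℂ) * (inner ℂ e b : ℂ)‖
      ≤ ‖(inner ℂ a x : ℂ)‖ + ‖α⁻¹ * (inner ℂ a b : ℂ)‖ := by
    rw [hkey_id]; exact norm_add_le _ _
  have h2 : ‖(inner ℂ a x : ℂ)‖ ≤ ‖a‖ * (m2 * ‖b‖ / ‖α‖) :=
    (norm_inner_le_norm a x).trans (by gcongr)
  have h3 : ‖α⁻¹ * (inner ℂ a b : ℂ)‖ = ‖(inner ℂ a b : ℂ)‖ / ‖α‖ := by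
    rw [norm_mul, h1b]; ring
  calc ‖(inner ℂ a e : ℂ) * (inner ℂ e b : ℂ)‖
      ≤ ‖a‖ * (m2 * ‖b‖ / ‖α‖) + ‖(inner ℂ a b : ℂ)‖ / ‖α‖ := by
        rw [h3] at h1; linarith
    _ = (m2 * (‖a‖ * ‖b‖) + ‖(inner ℂ a b : ℂ)‖) / ‖α‖ := by ring

/-- Scalar quadratic step. -/
private lemma aux_scalar (r β m2 s cc p : ℝ) (hr : 0 < r) (hβ : 0 ≤ β) (hm2 : 1 ≤ m2)
    (hs : 0 ≤ s) (hcc0 : 0 ≤ cc) (hcc : cc ≤ s) (hp0 : 0 ≤ p)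
    (hp : p ≤ (m2 * s + cc) / r) :
    p ^ 2 ≤ (β + (β + 1) * m2 ^ 2) / (r ^ 2 * (β + 1)) * s ^ 2
      + (1 + 2 * (β + 1) * m2) / (r ^ 2 * (β + 1)) * (s * cc) := by
  have hstep : p ^ 2 ≤ ((m2 * s + cc) / r) ^ 2 := pow_le_pow_left₀ hp0 hp 2
  refine hstep.trans ?_
  rw [div_pow, div_mul_eq_mul_div, div_mul_eq_mul_div, ← add_div,
    div_le_div_iff₀ (by positivity) (by positivity)]
  have hmain : (β + 1) * (m2 * s + cc) ^ 2 ≤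
      (β + (β + 1) * m2 ^ 2) * s ^ 2 + (1 + 2 * (β + 1) * m2) * (s * cc) := by
    nlinarith [mul_nonneg (sub_nonneg.2 hcc) hcc0,
      mul_nonneg hβ (mul_nonneg (sub_nonneg.2 hcc) (by linarith : (0:ℝ) ≤ s + cc))]
  calc (m2 * s + cc) ^ 2 * (r ^ 2 * (β + 1))
      = ((β + 1) * (m2 * s + cc) ^ 2) * r ^ 2 := by ring
    _ ≤ ((β + (β + 1) * m2 ^ 2) * s ^ 2 + (1 + 2 * (β + 1) * m2) * (s * cc)) * r ^ 2 :=
        mul_le_mul_of_nonneg_right hmain (sq_nonneg r)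
    _ = _ := by ring

/-- Binomial expansion of the extended Buzano inequality with parameters
`α ∈ ℂ \ {0}`, `β ≥ 0` and `n ∈ ℕ`. -/
theorem extended_buzano_pow {H : Type*} [NormedAddCommGroup H] [InnerProductSpace ℂ H]
    (a b e : H) (he : ‖e‖ = 1) (α : ℂ) (hα : α ≠ 0) (β : ℝ) (hβ : 0 ≤ β) (n : ℕ) :
    ‖(inner ℂ a e : ℂ) * (inner ℂ e b : ℂ)‖ ^ (2 * n) ≤
      ∑ k ∈ Finset.range (n + 1),
        (n.choose k : ℝ)
          * ((β + (β + 1) * max 1 (‖α - 1‖ ^ 2)) / (‖α‖ ^ 2 * (β + 1))) ^ k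
          * ((1 + 2 * (β + 1) * max 1 ‖α - 1‖) / (‖α‖ ^ 2 * (β + 1))) ^ (n - k)
          * (‖a‖ ^ (2 * k) * ‖b‖ ^ (2 * k))
          * (‖a‖ ^ (n - k) * ‖b‖ ^ (n - k))
          * ‖(inner ℂ a b : ℂ)‖ ^ (n - k) := by
  have hr : (0:ℝ) < ‖α‖ := norm_pos_iff.2 hα
  have hm1 : max 1 (‖α - 1‖ ^ 2) = (max 1 ‖α - 1‖) ^ 2 := by
    rcases le_total ‖α - 1‖ 1 with h | h
    · rw [max_eq_left (by nlinarith [norm_nonneg (α - 1)]), max_eq_left h, one_pow]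
    · rw [max_eq_right (by nlinarith), max_eq_right h]
  have hkey : ‖(inner ℂ a e : ℂ) * (inner ℂ e b : ℂ)‖ ^ 2 ≤
      ((β + (β + 1) * max 1 (‖α - 1‖ ^ 2)) / (‖α‖ ^ 2 * (β + 1))) * (‖a‖ * ‖b‖) ^ 2
      + ((1 + 2 * (β + 1) * max 1 ‖α - 1‖) / (‖α‖ ^ 2 * (β + 1)))
          * ((‖a‖ * ‖b‖) * ‖(inner ℂ a b : ℂ)‖) := by
    rw [hm1]
    exact aux_scalar ‖α‖ β (max 1 ‖α - 1‖) (‖a‖ * ‖b‖) ‖(inner ℂ a b : ℂ)‖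
      ‖(inner ℂ a e : ℂ) * (inner ℂ e b : ℂ)‖ hr hβ (le_max_left _ _)
      (by positivity) (norm_nonneg _) (norm_inner_le_norm a b) (norm_nonneg _)
      (by rw [div_eq_mul_inv, ← div_eq_mul_inv]; exact aux_buzano a b e he α hα)
  calc ‖(inner ℂ a e : ℂ) * (inner ℂ e b : ℂ)‖ ^ (2 * n)
      = (‖(inner ℂ a e : ℂ) * (inner ℂ e b : ℂ)‖ ^ 2) ^ n := by rw [← pow_mul]
    _ ≤ (((β + (β + 1) * max 1 (‖α - 1‖ ^ 2)) / (‖α‖ ^ 2 * (β + 1))) * (‖a‖ * ‖b‖) ^ 2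
          + ((1 + 2 * (β + 1) * max 1 ‖α - 1‖) / (‖α‖ ^ 2 * (β + 1)))
              * ((‖a‖ * ‖b‖) * ‖(inner ℂ a b : ℂ)‖)) ^ n :=
        pow_le_pow_left₀ (sq_nonneg _) hkey n
    _ = _ := by
        rw [add_pow]
        apply Finset.sum_congr rfl
        intro k hk
        rw [mul_pow, mul_pow, mul_pow, mul_pow, mul_pow]
        ring
end

section
/- Let H be a complex Hilbert space, B, C ∈ B(H), α ∈ ℂ with α ≠ 0, and β ≥ 0. Set δ₁ = (2(β+1)·max{1, |α−1|²} + 2β) / (|α|²(β+1)) and δ₂ = 2 / (|α|²(β+1)). Let 𝕋 be the operator on H ⊕ H given by 𝕋(x, y) = (B y, C x). Then ω(𝕋)⁴ ≤ (δ₁/4)·max{ ‖ |C|² + |B*|² ‖², ‖ |B|² + |C*|² ‖² } + δ₂·max{ ω(BC)², ω(CB)² }. -/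
open ContinuousLinearMap in
/-- The numerical radius `ω(A) = sup { |⟨A x, x⟩| : ‖x‖ = 1 }` of a bounded operator. -/
noncomputable def numRad {H : Type*} [NormedAddCommGroup H] [InnerProductSpace ℂ H]
    (A : H →L[ℂ] H) : ℝ :=
  sSup {t : ℝ | ∃ x : H, ‖x‖ = 1 ∧ t = ‖(inner ℂ (A x) x : ℂ)‖}

/-- The absolute value `|A| = (A*A)^{1/2}` of a bounded operator, via the continuous
functional calculus. -/
noncomputable def absOp {E F : Type*} [NormedAddCommGroup E] [InnerProductSpace ℂ E]
    [CompleteSpace E] [NormedAddCommGroup F] [InnerProductSpace ℂ F] [CompleteSpace F]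
    (A : E →L[ℂ] F) : E →L[ℂ] E :=
  cfc Real.sqrt ((ContinuousLinearMap.adjoint A).comp A)

open ContinuousLinearMap

section Aux
variable {K : Type*} [NormedAddCommGroup K] [InnerProductSpace ℂ K]

local notation "⟪" x ", " y "⟫" => @inner ℂ _ _ x y

private lemma numRadSet_bddAbove (A : K →L[ℂ] K) :
    BddAbove {t : ℝ | ∃ x : K, ‖x‖ = 1 ∧ t = ‖(inner ℂ (A x) x : ℂ)‖} := by
  refine ⟨‖A‖, ?_⟩
  rintro t ⟨x, hx, rfl⟩
  calc ‖(⟪A x, x⟫ : ℂ)‖ ≤ ‖A x‖ * ‖x‖ := norm_inner_le_norm _ _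
    _ ≤ (‖A‖ * ‖x‖) * ‖x‖ := by gcongr; exact A.le_opNorm x
    _ = ‖A‖ := by rw [hx]; ring

private lemma numRad_nonneg (A : K →L[ℂ] K) : 0 ≤ numRad A := by
  unfold numRad
  refine Real.sSup_nonneg ?_
  rintro t ⟨x, hx, rfl⟩
  exact norm_nonneg _

private lemma inner_le_numRad (A : K →L[ℂ] K) (y : K) :
    ‖(⟪A y, y⟫ : ℂ)‖ ≤ numRad A * ‖y‖ ^ 2 := by
  by_cases hy : y = 0
  · simp [hy]
  · have hy0 : (0:ℝ) < ‖y‖ := norm_pos_iff.2 hy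
    set u : K := ((‖y‖ : ℂ))⁻¹ • y with hu
    have hu1 : ‖u‖ = 1 := by
      rw [hu, norm_smul]
      simp [norm_inv, hy0.ne']
    have hAu : A u = ((‖y‖ : ℂ))⁻¹ • A y := by rw [hu, map_smul]
    have hinner : ‖(⟪A u, u⟫ : ℂ)‖ = (‖y‖)⁻¹ * ((‖y‖)⁻¹ * ‖(⟪A y, y⟫ : ℂ)‖) := by
      rw [hu, hAu, inner_smul_left, inner_smul_right, norm_mul, norm_mul]
      simp [map_inv₀]
    have hmem : ‖(⟪A u, u⟫ : ℂ)‖ ∈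
        {t : ℝ | ∃ x : K, ‖x‖ = 1 ∧ t = ‖(inner ℂ (A x) x : ℂ)‖} := ⟨u, hu1, rfl⟩
    have hle : ‖(⟪A u, u⟫ : ℂ)‖ ≤ numRad A := le_csSup (numRadSet_bddAbove A) hmem
    rw [hinner] at hle
    have h2 := mul_le_mul_of_nonneg_left hle (le_of_lt (mul_pos hy0 hy0))
    calc ‖(⟪A y, y⟫ : ℂ)‖
        = (‖y‖ * ‖y‖) * ((‖y‖)⁻¹ * ((‖y‖)⁻¹ * ‖(⟪A y, y⟫ : ℂ)‖)) := by
          field_simp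
        _ ≤ (‖y‖ * ‖y‖) * numRad A := h2
        _ = numRad A * ‖y‖ ^ 2 := by ring

set_option maxHeartbeats 1000000 in
private lemma key_ineq (α : ℂ) (hα : α ≠ 0) (β : ℝ) (hβ : 0 ≤ β) (e a b : K) (he : ‖e‖ = 1) :
    (‖(⟪a, e⟫ : ℂ)‖ * ‖(⟪e, b⟫ : ℂ)‖) ^ 2 ≤
      (2 * max 1 (‖α - 1‖ ^ 2) / (‖α‖ ^ 2 * (β + 1)) + β / (β + 1)) * (‖a‖ ^ 2 * ‖b‖ ^ 2)
        + 2 / (‖α‖ ^ 2 * (β + 1)) * ‖(⟪a, b⟫ : ℂ)‖ ^ 2 := by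
  have hA2 : (0:ℝ) < ‖α‖ ^ 2 := by
    have : (0:ℝ) < ‖α‖ := norm_pos_iff.mpr hα
    positivity
  set p : ℂ := ⟪e, a⟫ with hp
  set v : K := a - ((starRingEnd ℂ α) * p) • e with hv
  -- identity
  have hid : α * ⟪a, e⟫ * ⟪e, b⟫ = ⟪a, b⟫ - ⟪v, b⟫ := by
    rw [hv, inner_sub_left, inner_smul_left]
    have : (starRingEnd ℂ) ((starRingEnd ℂ α) * p) = α * (starRingEnd ℂ) p := by
      rw [map_mul, Complex.conj_conj]
    have hcp : (starRingEnd ℂ) p = ⟪a, e⟫ := by rw [hp, inner_conj_symm]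
    rw [this, hcp]
    ring
  -- norm of v
  have hpnorm : ‖p‖ ≤ ‖a‖ := by
    calc ‖p‖ ≤ ‖e‖ * ‖a‖ := norm_inner_le_norm e a
      _ = ‖a‖ := by rw [he, one_mul]
  have hvsq : ‖v‖ ^ 2 = ‖a‖ ^ 2 - 2 * α.re * ‖p‖ ^ 2 + ‖α‖ ^ 2 * ‖p‖ ^ 2 := by
    rw [hv, @norm_sub_sq ℂ]
    have h1 : (⟪a, ((starRingEnd ℂ α) * p) • e⟫ : ℂ) = (starRingEnd ℂ α) * p * ⟪a, e⟫ :=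
      inner_smul_right _ _ _
    have hcp : (⟪a, e⟫ : ℂ) = (starRingEnd ℂ) p := by rw [hp, ← inner_conj_symm]
    have h3 : RCLike.re (⟪a, ((starRingEnd ℂ α) * p) • e⟫ : ℂ) = α.re * ‖p‖ ^ 2 := by
      rw [h1, hcp, mul_assoc, Complex.mul_conj]
      simp [RCLike.re_to_complex, Complex.mul_re, Complex.normSq_eq_norm_sq,
        ← Complex.ofReal_pow]
    rw [h3, norm_smul, norm_mul, he]
    have : ‖(starRingEnd ℂ) α‖ = ‖α‖ := RCLike.norm_conj α
    rw [this]
    ring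
  have halre : ‖α - 1‖ ^ 2 = ‖α‖ ^ 2 - 2 * α.re + 1 := by
    rw [Complex.sq_norm, Complex.sq_norm,
      Complex.normSq_apply, Complex.normSq_apply]
    simp [Complex.sub_re, Complex.sub_im]
    ring
  have hv2 : ‖v‖ ^ 2 ≤ max 1 (‖α - 1‖ ^ 2) * ‖a‖ ^ 2 := by
    rcases le_or_gt (‖α‖ ^ 2) (2 * α.re) with hc | hc
    · have h1 : (1:ℝ) ≤ max 1 (‖α - 1‖ ^ 2) := le_max_left _ _
      nlinarith [sq_nonneg ‖p‖, sq_nonneg ‖a‖]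
    · have h1 : ‖α - 1‖ ^ 2 ≤ max 1 (‖α - 1‖ ^ 2) := le_max_right _ _
      nlinarith [sq_nonneg ‖a‖, norm_nonneg p, norm_nonneg a,
        mul_self_le_mul_self (norm_nonneg p) hpnorm]
  have hub : ‖α‖ * (‖(⟪a, e⟫ : ℂ)‖ * ‖(⟪e, b⟫ : ℂ)‖) ≤ ‖(⟪a, b⟫ : ℂ)‖ + ‖v‖ * ‖b‖ := by
    have := congrArg norm hid
    rw [norm_mul, norm_mul] at this
    rw [← mul_assoc, this]
    calc ‖(⟪a, b⟫ : ℂ) - ⟪v, b⟫‖ ≤ ‖(⟪a, b⟫ : ℂ)‖ + ‖(⟪v, b⟫ : ℂ)‖ := norm_sub_le _ _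
      _ ≤ ‖(⟪a, b⟫ : ℂ)‖ + ‖v‖ * ‖b‖ := by gcongr; exact norm_inner_le_norm v b
  have hstep2 : ‖α‖ ^ 2 * (‖(⟪a, e⟫ : ℂ)‖ * ‖(⟪e, b⟫ : ℂ)‖) ^ 2 ≤
      2 * ‖(⟪a, b⟫ : ℂ)‖ ^ 2 + 2 * max 1 (‖α - 1‖ ^ 2) * (‖a‖ ^ 2 * ‖b‖ ^ 2) := by
    have hvb : (‖v‖ * ‖b‖) ^ 2 ≤ max 1 (‖α - 1‖ ^ 2) * (‖a‖ ^ 2 * ‖b‖ ^ 2) := by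
      have := mul_le_mul_of_nonneg_right hv2 (sq_nonneg ‖b‖)
      calc (‖v‖ * ‖b‖) ^ 2 = ‖v‖ ^ 2 * ‖b‖ ^ 2 := by ring
        _ ≤ max 1 (‖α - 1‖ ^ 2) * ‖a‖ ^ 2 * ‖b‖ ^ 2 := this
        _ = max 1 (‖α - 1‖ ^ 2) * (‖a‖ ^ 2 * ‖b‖ ^ 2) := by ring
    nlinarith [hub, norm_nonneg (⟪a, b⟫ : ℂ), mul_nonneg (norm_nonneg v) (norm_nonneg b),
      mul_nonneg (norm_nonneg α) (mul_nonneg (norm_nonneg (⟪a, e⟫ : ℂ)) (norm_nonneg (⟪e, b⟫ : ℂ))),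
      sq_nonneg (‖(⟪a, b⟫ : ℂ)‖ - ‖v‖ * ‖b‖)]
  have hCS : (‖(⟪a, e⟫ : ℂ)‖ * ‖(⟪e, b⟫ : ℂ)‖) ^ 2 ≤ ‖a‖ ^ 2 * ‖b‖ ^ 2 := by
    have h1 : ‖(⟪a, e⟫ : ℂ)‖ ≤ ‖a‖ := by
      calc ‖(⟪a, e⟫ : ℂ)‖ ≤ ‖a‖ * ‖e‖ := norm_inner_le_norm a e
        _ = ‖a‖ := by rw [he, mul_one]
    have h2 : ‖(⟪e, b⟫ : ℂ)‖ ≤ ‖b‖ := by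
      calc ‖(⟪e, b⟫ : ℂ)‖ ≤ ‖e‖ * ‖b‖ := norm_inner_le_norm e b
        _ = ‖b‖ := by rw [he, one_mul]
    have := mul_le_mul h1 h2 (norm_nonneg _) (norm_nonneg _)
    nlinarith [mul_nonneg (norm_nonneg (⟪a, e⟫ : ℂ)) (norm_nonneg (⟪e, b⟫ : ℂ))]
  set r2 : ℝ := (‖(⟪a, e⟫ : ℂ)‖ * ‖(⟪e, b⟫ : ℂ)‖) ^ 2 with hr2
  set I2 : ℝ := ‖(⟪a, b⟫ : ℂ)‖ ^ 2 with hI2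
  set ab : ℝ := ‖a‖ ^ 2 * ‖b‖ ^ 2 with hab
  set Mx : ℝ := max 1 (‖α - 1‖ ^ 2) with hMx
  have hden : (0:ℝ) < ‖α‖ ^ 2 * (β + 1) := by positivity
  have hmain : r2 * (‖α‖ ^ 2 * (β + 1)) ≤ (2 * Mx + ‖α‖ ^ 2 * β) * ab + 2 * I2 := by
    have h2 : ‖α‖ ^ 2 * β * r2 ≤ ‖α‖ ^ 2 * β * ab :=
      mul_le_mul_of_nonneg_left hCS (by positivity)
    nlinarith [hstep2]
  have harith : ∀ A2' : ℝ, 0 < A2' → r2 * (A2' * (β + 1)) ≤ (2 * Mx + A2' * β) * ab + 2 * I2 →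
      r2 ≤ (2 * Mx / (A2' * (β + 1)) + β / (β + 1)) * ab + 2 / (A2' * (β + 1)) * I2 := by
    intro A2' hA2' hm
    have hden' : (0:ℝ) < A2' * (β + 1) := by positivity
    have h1 : β + 1 ≠ 0 := by positivity
    have h2 : A2' ≠ 0 := ne_of_gt hA2'
    have := (le_div_iff₀ hden').2 hm
    refine this.trans (le_of_eq ?_)
    field_simp
  exact harith _ hA2 hmain

end Aux

set_option maxHeartbeats 8000000 in
/-- Theorem `MOBY-A1`: fourth-power numerical radius bound for the off-diagonal operator
matrix `[[0, B], [C, 0]]` with parameters `α ∈ ℂ \ {0}` and `β ≥ 0`. -/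
theorem offdiag_numRad_pow_four {H : Type*}
    [NormedAddCommGroup H] [InnerProductSpace ℂ H] [CompleteSpace H]
    (B C : H →L[ℂ] H) (α : ℂ) (hα : α ≠ 0) (β : ℝ) (hβ : 0 ≤ β)
    (T : WithLp 2 (H × H) →L[ℂ] WithLp 2 (H × H))
    (hT : ∀ x y : H,
      T ((WithLp.equiv 2 (H × H)).symm (x, y)) = (WithLp.equiv 2 (H × H)).symm (B y, C x)) :
    numRad T ^ 4 ≤
      (2 * (β + 1) * max 1 (‖α - 1‖ ^ 2) + 2 * β) / (‖α‖ ^ 2 * (β + 1)) / 4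
          * max (‖adjoint C * C + B * adjoint B‖ ^ 2) (‖adjoint B * B + C * adjoint C‖ ^ 2)
        + 2 / (‖α‖ ^ 2 * (β + 1))
          * max (numRad (B * C) ^ 2) (numRad (C * B) ^ 2) := by
  have hA2 : (0:ℝ) < ‖α‖ ^ 2 := by
    have : (0:ℝ) < ‖α‖ := norm_pos_iff.mpr hα
    positivity
  have hden : (0:ℝ) < ‖α‖ ^ 2 * (β + 1) := by positivity
  set Mx : ℝ := max 1 (‖α - 1‖ ^ 2) with hMxdef
  have hMx1 : (1:ℝ) ≤ Mx := le_max_left _ _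
  set M1 : ℝ := ‖adjoint C * C + B * adjoint B‖ with hM1
  set M2 : ℝ := ‖adjoint B * B + C * adjoint C‖ with hM2
  set MM : ℝ := max (M1 ^ 2) (M2 ^ 2) with hMM
  set N : ℝ := max (numRad (B * C) ^ 2) (numRad (C * B) ^ 2) with hN
  set R : ℝ := (2 * (β + 1) * Mx + 2 * β) / (‖α‖ ^ 2 * (β + 1)) / 4 * MM
      + 2 / (‖α‖ ^ 2 * (β + 1)) * N with hR
  have hMM0 : (0:ℝ) ≤ MM := le_trans (sq_nonneg M1) (le_max_left _ _)
  have hN0 : (0:ℝ) ≤ N := le_trans (sq_nonneg _) (le_max_left _ _)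
  have hδ10 : (0:ℝ) ≤ (2 * (β + 1) * Mx + 2 * β) / (‖α‖ ^ 2 * (β + 1)) / 4 := by
    apply div_nonneg _ (by norm_num)
    apply div_nonneg _ (le_of_lt hden)
    nlinarith
  have hδ20 : (0:ℝ) ≤ 2 / (‖α‖ ^ 2 * (β + 1)) := by positivity
  have hR0 : (0:ℝ) ≤ R := by
    rw [hR]; exact add_nonneg (mul_nonneg hδ10 hMM0) (mul_nonneg hδ20 hN0)
  -- the pointwise bound
  have hbound : ∀ x : WithLp 2 (H × H), ‖x‖ = 1 → ‖(inner ℂ (T x) x : ℂ)‖ ^ 4 ≤ R := by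
    intro x hx
    have hxc : (WithLp.equiv 2 (H × H)).symm (x.fst, x.snd) = x := rfl
    have hTx : T x = (WithLp.equiv 2 (H × H)).symm (B x.snd, C x.fst) := by
      conv_lhs => rw [← hxc]
      exact hT x.fst x.snd
    set b : WithLp 2 (H × H) :=
      (WithLp.equiv 2 (H × H)).symm (adjoint C x.snd, adjoint B x.fst) with hbdef
    have hTx1 : (T x).fst = B x.snd := by rw [hTx]; rfl
    have hTx2 : (T x).snd = C x.fst := by rw [hTx]; rfl
    have hb1 : b.fst = adjoint C x.snd := rfl
    have hb2 : b.snd = adjoint B x.fst := rfl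
    -- inner product identities
    have hax : (inner ℂ (T x) x : ℂ) = inner ℂ (B x.snd) x.fst + inner ℂ (C x.fst) x.snd := by
      rw [WithLp.prod_inner_apply]
      change inner ℂ (T x).fst x.fst + inner ℂ (T x).snd x.snd = _
      rw [hTx1, hTx2]
    have hxb : (inner ℂ x b : ℂ) = inner ℂ (T x) x := by
      rw [WithLp.prod_inner_apply]
      change inner ℂ x.fst b.fst + inner ℂ x.snd b.snd = _
      rw [hb1, hb2, adjoint_inner_right, adjoint_inner_right, hax]
      ring
    have habI : (inner ℂ (T x) b : ℂ)
        = inner ℂ ((B * C) x.fst) x.fst + inner ℂ ((C * B) x.snd) x.snd := by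
      rw [WithLp.prod_inner_apply]
      change inner ℂ (T x).fst b.fst + inner ℂ (T x).snd b.snd = _
      rw [hTx1, hTx2, hb1, hb2, adjoint_inner_right,
        adjoint_inner_right]
      simp only [ContinuousLinearMap.mul_apply]
      ring
    -- norm identities
    have hnx : ‖x.fst‖ ^ 2 + ‖x.snd‖ ^ 2 = 1 := by
      have h := WithLp.prod_norm_sq_eq_of_L2 x
      rw [hx, one_pow] at h
      exact h.symm
    have hna : ‖T x‖ ^ 2 = ‖B x.snd‖ ^ 2 + ‖C x.fst‖ ^ 2 := by
      rw [WithLp.prod_norm_sq_eq_of_L2, hTx1, hTx2]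
    have hnb : ‖b‖ ^ 2 = ‖adjoint C x.snd‖ ^ 2 + ‖adjoint B x.fst‖ ^ 2 := by
      rw [WithLp.prod_norm_sq_eq_of_L2, hb1, hb2]
    -- operator norm bounds
    have hM1b : ‖C x.fst‖ ^ 2 + ‖adjoint B x.fst‖ ^ 2 ≤ M1 * ‖x.fst‖ ^ 2 := by
      have he1 : (inner ℂ ((adjoint C * C + B * adjoint B) x.fst) x.fst : ℂ)
          = ((‖C x.fst‖ ^ 2 + ‖adjoint B x.fst‖ ^ 2 : ℝ) : ℂ) := by
        rw [ContinuousLinearMap.add_apply, inner_add_left, ContinuousLinearMap.mul_apply,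
          ContinuousLinearMap.mul_apply, adjoint_inner_left]
        have h2 := adjoint_inner_left (adjoint B) x.fst (adjoint B x.fst)
        rw [ContinuousLinearMap.adjoint_adjoint] at h2
        rw [h2, inner_self_eq_norm_sq_to_K, inner_self_eq_norm_sq_to_K]
        norm_cast
      have heq : ‖C x.fst‖ ^ 2 + ‖adjoint B x.fst‖ ^ 2
          = ‖(inner ℂ ((adjoint C * C + B * adjoint B) x.fst) x.fst : ℂ)‖ := by
        rw [he1, Complex.norm_real]
        exact (Real.norm_of_nonneg (by positivity)).symm
      calc ‖C x.fst‖ ^ 2 + ‖adjoint B x.fst‖ ^ 2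
          = ‖(inner ℂ ((adjoint C * C + B * adjoint B) x.fst) x.fst : ℂ)‖ := heq
        _ ≤ ‖(adjoint C * C + B * adjoint B) x.fst‖ * ‖x.fst‖ := norm_inner_le_norm _ _
        _ ≤ (M1 * ‖x.fst‖) * ‖x.fst‖ := by gcongr; exact le_opNorm _ _
        _ = M1 * ‖x.fst‖ ^ 2 := by ring
    have hM2b : ‖B x.snd‖ ^ 2 + ‖adjoint C x.snd‖ ^ 2 ≤ M2 * ‖x.snd‖ ^ 2 := by
      have he1 : (inner ℂ ((adjoint B * B + C * adjoint C) x.snd) x.snd : ℂ)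
          = ((‖B x.snd‖ ^ 2 + ‖adjoint C x.snd‖ ^ 2 : ℝ) : ℂ) := by
        rw [ContinuousLinearMap.add_apply, inner_add_left, ContinuousLinearMap.mul_apply,
          ContinuousLinearMap.mul_apply, adjoint_inner_left]
        have h2 := adjoint_inner_left (adjoint C) x.snd (adjoint C x.snd)
        rw [ContinuousLinearMap.adjoint_adjoint] at h2
        rw [h2, inner_self_eq_norm_sq_to_K, inner_self_eq_norm_sq_to_K]
        norm_cast
      have heq : ‖B x.snd‖ ^ 2 + ‖adjoint C x.snd‖ ^ 2
          = ‖(inner ℂ ((adjoint B * B + C * adjoint C) x.snd) x.snd : ℂ)‖ := by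
        rw [he1, Complex.norm_real]
        exact (Real.norm_of_nonneg (by positivity)).symm
      calc ‖B x.snd‖ ^ 2 + ‖adjoint C x.snd‖ ^ 2
          = ‖(inner ℂ ((adjoint B * B + C * adjoint C) x.snd) x.snd : ℂ)‖ := heq
        _ ≤ ‖(adjoint B * B + C * adjoint C) x.snd‖ * ‖x.snd‖ := norm_inner_le_norm _ _
        _ ≤ (M2 * ‖x.snd‖) * ‖x.snd‖ := by gcongr; exact le_opNorm _ _
        _ = M2 * ‖x.snd‖ ^ 2 := by ring
    -- sum bound
    have hsum : ‖T x‖ ^ 2 + ‖b‖ ^ 2 ≤ max M1 M2 := by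
      calc ‖T x‖ ^ 2 + ‖b‖ ^ 2
          = (‖C x.fst‖ ^ 2 + ‖adjoint B x.fst‖ ^ 2)
            + (‖B x.snd‖ ^ 2 + ‖adjoint C x.snd‖ ^ 2) := by rw [hna, hnb]; ring
        _ ≤ M1 * ‖x.fst‖ ^ 2 + M2 * ‖x.snd‖ ^ 2 := add_le_add hM1b hM2b
        _ ≤ max M1 M2 * ‖x.fst‖ ^ 2 + max M1 M2 * ‖x.snd‖ ^ 2 := by
            gcongr
            · exact le_max_left _ _
            · exact le_max_right _ _
        _ = max M1 M2 * (‖x.fst‖ ^ 2 + ‖x.snd‖ ^ 2) := by ring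
        _ = max M1 M2 := by rw [hnx, mul_one]
    have hab4 : ‖T x‖ ^ 2 * ‖b‖ ^ 2 ≤ MM / 4 := by
      have hmm : (max M1 M2) ^ 2 ≤ MM := by
        rcases max_cases M1 M2 with ⟨h, _⟩ | ⟨h, _⟩ <;> rw [h]
        · exact le_max_left _ _
        · exact le_max_right _ _
      have hs0 : (0:ℝ) ≤ ‖T x‖ ^ 2 + ‖b‖ ^ 2 := by positivity
      have hsq := mul_self_le_mul_self hs0 hsum
      nlinarith [sq_nonneg (‖T x‖ ^ 2 - ‖b‖ ^ 2)]
    -- numerical radius bound for the inner product term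
    have hIb : ‖(inner ℂ (T x) b : ℂ)‖ ^ 2 ≤ N := by
      have h1 := inner_le_numRad (B * C) x.fst
      have h2 := inner_le_numRad (C * B) x.snd
      have hn1 : (0:ℝ) ≤ numRad (B * C) := numRad_nonneg _
      have hn2 : (0:ℝ) ≤ numRad (C * B) := numRad_nonneg _
      have hle : ‖(inner ℂ (T x) b : ℂ)‖ ≤ max (numRad (B * C)) (numRad (C * B)) := by
        calc ‖(inner ℂ (T x) b : ℂ)‖
            ≤ ‖(inner ℂ ((B * C) x.fst) x.fst : ℂ)‖ + ‖(inner ℂ ((C * B) x.snd) x.snd : ℂ)‖ := by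
              rw [habI]; exact norm_add_le _ _
          _ ≤ numRad (B * C) * ‖x.fst‖ ^ 2 + numRad (C * B) * ‖x.snd‖ ^ 2 := add_le_add h1 h2
          _ ≤ max (numRad (B * C)) (numRad (C * B)) * ‖x.fst‖ ^ 2
                + max (numRad (B * C)) (numRad (C * B)) * ‖x.snd‖ ^ 2 := by
              gcongr
              · exact le_max_left _ _
              · exact le_max_right _ _
          _ = max (numRad (B * C)) (numRad (C * B)) * (‖x.fst‖ ^ 2 + ‖x.snd‖ ^ 2) := by ring
          _ = max (numRad (B * C)) (numRad (C * B)) := by rw [hnx, mul_one]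
      have hmx0 : (0:ℝ) ≤ max (numRad (B * C)) (numRad (C * B)) := le_trans hn1 (le_max_left _ _)
      have hsq := mul_self_le_mul_self (norm_nonneg _) hle
      have hmm : (max (numRad (B * C)) (numRad (C * B))) ^ 2 ≤ N := by
        rcases max_cases (numRad (B * C)) (numRad (C * B)) with ⟨h, _⟩ | ⟨h, _⟩ <;> rw [h]
        · exact le_max_left _ _
        · exact le_max_right _ _
      nlinarith
    clear_value b
    -- apply the key inequality
    have hkey := key_ineq α hα β hβ x (T x) b hx
    rw [hxb] at hkey
    have hc10 : (0:ℝ) ≤ 2 * Mx / (‖α‖ ^ 2 * (β + 1)) + β / (β + 1) := by positivity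
    -- coefficient comparison
    have halpha : ‖α‖ ^ 2 ≤ 2 + 2 * Mx := by
      have h' : ‖α‖ ≤ ‖α - 1‖ + 1 := by
        calc ‖α‖ = ‖(α - 1) + 1‖ := by ring_nf
          _ ≤ ‖α - 1‖ + ‖(1:ℂ)‖ := norm_add_le _ _
          _ = ‖α - 1‖ + 1 := by rw [norm_one]
      have h2 : ‖α - 1‖ ^ 2 ≤ Mx := le_max_right _ _
      nlinarith [norm_nonneg (α - 1), sq_nonneg (‖α - 1‖ - 1),
        mul_self_le_mul_self (norm_nonneg α) h']
    have hc1le : 2 * Mx / (‖α‖ ^ 2 * (β + 1)) + β / (β + 1)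
        ≤ (2 * (β + 1) * Mx + 2 * β) / (‖α‖ ^ 2 * (β + 1)) := by
      have harith2 : ∀ A2' : ℝ, 0 < A2' → A2' ≤ 2 + 2 * Mx →
          2 * Mx / (A2' * (β + 1)) + β / (β + 1)
            ≤ (2 * (β + 1) * Mx + 2 * β) / (A2' * (β + 1)) := by
        intro A2' h0 hle'
        have hb0 : (0:ℝ) < β + 1 := by linarith
        have hd : (0:ℝ) < A2' * (β + 1) := by positivity
        have hkey2 : (2 * (β + 1) * Mx + 2 * β) / (A2' * (β + 1))
            - (2 * Mx / (A2' * (β + 1)) + β / (β + 1))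
            = β * ((2 + 2 * Mx) - A2') / (A2' * (β + 1)) := by
          field_simp
          ring
        have hpos : 0 ≤ β * ((2 + 2 * Mx) - A2') / (A2' * (β + 1)) :=
          div_nonneg (mul_nonneg hβ (sub_nonneg.2 hle')) (le_of_lt hd)
        linarith [hkey2, hpos]
      exact harith2 _ hA2 halpha
    calc ‖(inner ℂ (T x) x : ℂ)‖ ^ 4
        = (‖(inner ℂ (T x) x : ℂ)‖ * ‖(inner ℂ (T x) x : ℂ)‖) ^ 2 := by ring
      _ ≤ (2 * Mx / (‖α‖ ^ 2 * (β + 1)) + β / (β + 1)) * (‖T x‖ ^ 2 * ‖b‖ ^ 2)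
            + 2 / (‖α‖ ^ 2 * (β + 1)) * ‖(inner ℂ (T x) b : ℂ)‖ ^ 2 := hkey
      _ ≤ (2 * Mx / (‖α‖ ^ 2 * (β + 1)) + β / (β + 1)) * (MM / 4)
            + 2 / (‖α‖ ^ 2 * (β + 1)) * N := by
          exact add_le_add (mul_le_mul_of_nonneg_left hab4 hc10)
            (mul_le_mul_of_nonneg_left hIb hδ20)
      _ ≤ (2 * (β + 1) * Mx + 2 * β) / (‖α‖ ^ 2 * (β + 1)) / 4 * MM
            + 2 / (‖α‖ ^ 2 * (β + 1)) * N := by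
          have hmul := mul_le_mul_of_nonneg_right hc1le hMM0
          linarith
      _ = R := hR.symm
  -- conclude via the supremum
  have hsup : numRad T ≤ R ^ ((1:ℝ)/4) := by
    unfold numRad
    refine Real.sSup_le ?_ (Real.rpow_nonneg hR0 _)
    rintro t ⟨x, hx, rfl⟩
    have ht4 := hbound x hx
    have ht0 : (0:ℝ) ≤ ‖(inner ℂ (T x) x : ℂ)‖ := norm_nonneg _
    calc ‖(inner ℂ (T x) x : ℂ)‖
        = (‖(inner ℂ (T x) x : ℂ)‖ ^ (4:ℕ)) ^ ((1:ℝ)/4) := by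
          rw [← Real.rpow_natCast _ 4, ← Real.rpow_mul ht0]
          norm_num
      _ ≤ R ^ ((1:ℝ)/4) := Real.rpow_le_rpow (by positivity) ht4 (by norm_num)
  have h0 : (0:ℝ) ≤ numRad T := numRad_nonneg _
  calc numRad T ^ 4 ≤ (R ^ ((1:ℝ)/4)) ^ 4 := pow_le_pow_left₀ h0 hsup 4
    _ = R := by
        rw [← Real.rpow_natCast (R ^ ((1:ℝ)/4)) 4, ← Real.rpow_mul hR0]
        norm_num
end

section
/- Let H be a complex Hilbert space, M ∈ B(H), β ≥ 0, and let r ≥ 1 be a real number. Then ω(M)^{4r} ≤ (1/16)·((2β+1)/(β+1))·‖ |M|^{2r} + |M*|^{2r} ‖² + (1/8)·((2β+3)/(β+1))·‖ |M|^{2r} + |M*|^{2r} ‖·ω(M²)^{r}, where |M|^{2r} and |M*|^{2r} denote real powers of the positive operators |M| and |M*| defined via the continuous functional calculus. -/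
set_option maxHeartbeats 2000000
set_option linter.unusedSectionVars false

open ContinuousLinearMap

section Aux

open RCLike

/-- tangent line inequality for rpow -/
lemma aux_tangent_rpow {r : ℝ} (hr : 1 ≤ r) {s t : ℝ} (hs : 0 ≤ s) (ht : 0 ≤ t) :
    r * s^(r-1) * t + (1-r) * s^r ≤ t ^ r := by
  rcases hs.eq_or_lt with h0 | hpos
  · rcases hr.eq_or_lt with h1 | h1
    · simp [← h0, ← h1]
    · rw [← h0, Real.zero_rpow (by linarith), Real.zero_rpow (by linarith)]
      simpa using Real.rpow_nonneg ht r
  · have hz : -1 ≤ (t - s)/s := by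
      rw [neg_le, ← neg_div, div_le_one hpos]; linarith
    have hb := one_add_mul_self_le_rpow_one_add hz hr
    have h1z : 1 + (t-s)/s = t/s := by field_simp; ring
    rw [h1z, Real.div_rpow ht hpos.le] at hb
    have hsr : (0:ℝ) < s ^ r := Real.rpow_pos_of_pos hpos r
    have hb2 := (le_div_iff₀ hsr).mp hb
    have e : (1 + r * ((t - s)/s)) * s ^ r = r * s^(r-1) * t + (1-r) * s^r := by
      have h1 : s ^ r = s^(r-1) * s := by rw [← Real.rpow_add_one hpos.ne']; ring_nf
      rw [h1]; field_simp; ring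
    linarith [e ▸ hb2]

lemma aux_tangent_eq {r : ℝ} (hr : 1 ≤ r) {s : ℝ} (hs : 0 ≤ s) :
    r * s^(r-1) * s + (1-r) * s^r = s ^ r := by
  rcases hs.eq_or_lt with h0 | hpos
  · rcases hr.eq_or_lt with h1 | h1
    · simp [← h0, ← h1]
    · rw [← h0, Real.zero_rpow (by linarith), Real.zero_rpow (by linarith)]; ring
  · have h1 : s^(r-1) * s = s ^ r := by rw [← Real.rpow_add_one hpos.ne']; ring_nf
    nlinarith [h1]

lemma aux_two_point {u v p : ℝ} (hu : 0 ≤ u) (hv : 0 ≤ v) (hp : 1 ≤ p) :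
    ((u + v)/2) ^ p ≤ (u^p + v^p)/2 := by
  have h := (convexOn_rpow hp).2 (Set.mem_Ici.mpr hu) (Set.mem_Ici.mpr hv)
    (by norm_num : (0:ℝ) ≤ 1/2) (by norm_num : (0:ℝ) ≤ 1/2) (by norm_num)
  simp only [smul_eq_mul] at h
  calc ((u+v)/2)^p = (1/2*u + 1/2*v)^p := by ring_nf
    _ ≤ 1/2 * u^p + 1/2*v^p := h
    _ = (u^p+v^p)/2 := by ring

lemma aux_rpow_le_of_rpow_le {p c s : ℝ} (hp : 0 < p) (hs : 0 ≤ s) (h : s ^ p ≤ c) :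
    s ≤ c ^ p⁻¹ := by
  have h1 : (s^p)^(p⁻¹) ≤ c^(p⁻¹) :=
    Real.rpow_le_rpow (Real.rpow_nonneg hs p) h (inv_nonneg.mpr hp.le)
  rwa [← Real.rpow_mul hs, mul_inv_cancel₀ hp.ne', Real.rpow_one] at h1

lemma aux_rpow_le_of_le_rpow {p c s : ℝ} (hp : 0 < p) (hs : 0 ≤ s) (hc : 0 ≤ c)
    (h : s ≤ c ^ p⁻¹) : s ^ p ≤ c := by
  have h1 := Real.rpow_le_rpow hs h hp.le
  rwa [← Real.rpow_mul hc, inv_mul_cancel₀ hp.ne', Real.rpow_one] at h1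

variable {H : Type*} [NormedAddCommGroup H] [InnerProductSpace ℂ H]

/-- Buzano's inequality. -/
lemma aux_buzano_s10 {x : H} (hx : ‖x‖ = 1) (a b : H) :
    ‖(inner ℂ a x : ℂ) * (inner ℂ x b : ℂ)‖ ≤ (‖a‖ * ‖b‖ + ‖(inner ℂ a b : ℂ)‖) / 2 := by
  set c : ℂ := inner ℂ x b with hc
  set b' : H := (2 * c) • x - b with hb'
  have e1 : ‖(2*c) • x‖^2 = 4 * ‖c‖^2 := by
    rw [norm_smul, hx, mul_one, norm_mul]
    norm_num; ring
  have e2 : re (inner ℂ ((2*c) • x) b : ℂ) = 2 * ‖c‖^2 := by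
    rw [inner_smul_left, ← hc]
    have h' : (starRingEnd ℂ) (2*c) * c = 2 * ((‖c‖:ℂ) ^ 2) := by
      rw [map_mul, mul_assoc, RCLike.conj_mul]
      rw [Complex.conj_ofNat]
      norm_num
    rw [h']
    simp [← Complex.ofReal_pow]
  have h1 : ‖b'‖^2 = ‖b‖^2 := by
    rw [hb', @norm_sub_sq ℂ, e1, e2]; ring
  have hnb : ‖b'‖ = ‖b‖ := by
    have := congrArg Real.sqrt h1
    rwa [Real.sqrt_sq (norm_nonneg _), Real.sqrt_sq (norm_nonneg _)] at this
  have hib : (inner ℂ a b' : ℂ) = 2 * ((inner ℂ a x : ℂ) * (inner ℂ x b : ℂ)) - inner ℂ a b := by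
    rw [hb', inner_sub_right, inner_smul_right, hc]; ring
  have hcs : ‖(inner ℂ a b' : ℂ)‖ ≤ ‖a‖ * ‖b‖ := by
    calc ‖(inner ℂ a b' : ℂ)‖ ≤ ‖a‖ * ‖b'‖ := norm_inner_le_norm a b'
      _ = ‖a‖ * ‖b‖ := by rw [hnb]
  rw [hib] at hcs
  have htri := norm_sub_norm_le (2 * ((inner ℂ a x : ℂ) * (inner ℂ x b : ℂ))) (inner ℂ a b : ℂ)
  rw [norm_mul] at htri
  have h2 : ‖(2:ℂ)‖ = 2 := by norm_num
  rw [h2] at htri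
  linarith

variable [CompleteSpace H]

lemma aux_inner_mono {S1 S2 : H →L[ℂ] H} (h : S1 ≤ S2) (x : H) :
    re (inner ℂ (S1 x) x : ℂ) ≤ re (inner ℂ (S2 x) x : ℂ) := by
  rw [ContinuousLinearMap.le_def] at h
  have h0 := h.re_inner_nonneg_left x
  simp only [ContinuousLinearMap.sub_apply, inner_sub_left, map_sub] at h0
  linarith

lemma aux_contOn_rpow (q : ℝ) (hq : 0 < q) (s : Set ℝ) : ContinuousOn (fun t : ℝ => t ^ q) s :=
  fun x _ => (Real.continuousAt_rpow_const x q (Or.inr hq.le)).continuousWithinAt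

/-- McCarthy's inequality. -/
lemma aux_mccarthy (T : H →L[ℂ] H) (hT : 0 ≤ T) {r : ℝ} (hr : 1 ≤ r) {x : H} (hx : ‖x‖ = 1) :
    (re (inner ℂ (T x) x : ℂ)) ^ r ≤ re (inner ℂ (cfc (fun t : ℝ => t ^ r) T x) x : ℂ) := by
  have hr0 : (0:ℝ) < r := lt_of_lt_of_le one_pos hr
  have hTp : T.IsPositive := (ContinuousLinearMap.nonneg_iff_isPositive T).mp hT
  have hsa : IsSelfAdjoint T := hTp.isSelfAdjoint
  set s : ℝ := re (inner ℂ (T x) x : ℂ) with hs_def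
  have hs : 0 ≤ s := hTp.re_inner_nonneg_left x
  set c1 : ℝ := r * s ^ (r-1) with hc1
  set c2 : ℝ := (1-r) * s ^ r with hc2
  have hcfc : cfc (fun t : ℝ => c1 * t + c2) T = c1 • T + c2 • (1 : H →L[ℂ] H) := by
    rw [cfc_add T (fun t => c1 * t) (fun _ => c2) (by fun_prop) (by fun_prop),
      cfc_const_mul_id c1 T, cfc_const c2 T, Algebra.algebraMap_eq_smul_one]
  have hle : c1 • T + c2 • (1 : H →L[ℂ] H) ≤ cfc (fun t : ℝ => t ^ r) T := by
    rw [← hcfc]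
    refine cfc_mono (fun t ht => ?_) (by fun_prop) (aux_contOn_rpow r hr0 _)
    have ht0 : 0 ≤ t := spectrum_nonneg_of_nonneg hT ht
    simpa [hc1, hc2, mul_comm] using aux_tangent_rpow hr hs ht0
  have h2 := aux_inner_mono hle x
  have h3 : re (inner ℂ ((c1 • T + c2 • (1 : H →L[ℂ] H)) x) x : ℂ) = c1 * s + c2 := by
    simp only [ContinuousLinearMap.add_apply, ContinuousLinearMap.smul_apply,
      ContinuousLinearMap.one_apply, inner_add_left, map_add]
    rw [RCLike.real_smul_eq_coe_smul (K := ℂ), RCLike.real_smul_eq_coe_smul (K := ℂ),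
      inner_smul_left, inner_smul_left]
    simp [inner_self_eq_norm_sq, hx, hs_def]
  rw [h3] at h2
  calc s ^ r = c1 * s + c2 := (aux_tangent_eq hr hs).symm ▸ by ring
    _ ≤ _ := h2

lemma aux_selfcomp_nonneg (A : H →L[ℂ] H) : (0:H→L[ℂ]H) ≤ (adjoint A).comp A := by
  have := star_mul_self_nonneg A
  simpa [ContinuousLinearMap.star_eq_adjoint, ContinuousLinearMap.mul_def] using this

/-- `|A|^{2r} = (A* A)^r`. -/
lemma aux_absOp_rpow (A : H →L[ℂ] H) {r : ℝ} (hr : 1 ≤ r) :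
    cfc (fun t : ℝ => t ^ (2*r)) (absOp A) =
      cfc (fun t : ℝ => t ^ r) ((adjoint A).comp A) := by
  have hr0 : (0:ℝ) < r := lt_of_lt_of_le one_pos hr
  have hT : (0:H→L[ℂ]H) ≤ (adjoint A).comp A := aux_selfcomp_nonneg A
  have hsa : IsSelfAdjoint ((adjoint A).comp A) := .of_nonneg hT
  rw [absOp, ← cfc_comp (fun t : ℝ => t ^ (2*r)) Real.sqrt ((adjoint A).comp A) hsa
    (aux_contOn_rpow (2*r) (by linarith) _) Real.continuous_sqrt.continuousOn]
  refine cfc_congr (fun t ht => ?_)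
  have ht0 : 0 ≤ t := spectrum_nonneg_of_nonneg hT ht
  simp only [Function.comp_apply]
  rw [Real.sqrt_eq_rpow, ← Real.rpow_mul ht0]
  congr 1
  ring

lemma aux_norm_apply_rpow_le (A : H →L[ℂ] H) {r : ℝ} (hr : 1 ≤ r) {x : H} (hx : ‖x‖ = 1) :
    ‖A x‖ ^ (2*r) ≤ re (inner ℂ (cfc (fun t : ℝ => t ^ (2*r)) (absOp A) x) x : ℂ) := by
  rw [aux_absOp_rpow A hr]
  have hT : (0:H→L[ℂ]H) ≤ (adjoint A).comp A := aux_selfcomp_nonneg A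
  have h2 : re (inner ℂ (((adjoint A).comp A) x) x : ℂ) = ‖A x‖ ^ (2:ℕ) := by
    rw [ContinuousLinearMap.comp_apply, adjoint_inner_left]
    simp [inner_self_eq_norm_sq, ← Complex.ofReal_pow]
  calc ‖A x‖ ^ (2*r) = (‖A x‖ ^ (2:ℝ)) ^ r := by rw [← Real.rpow_mul (norm_nonneg _)]
    _ = (re (inner ℂ (((adjoint A).comp A) x) x : ℂ)) ^ r := by
        rw [h2, Real.rpow_two]
    _ ≤ _ := aux_mccarthy _ hT hr hx

lemma aux_numRad_nonneg (A : H →L[ℂ] H) : 0 ≤ numRad A :=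
  Real.sSup_nonneg (fun t ht => by obtain ⟨x, _, rfl⟩ := ht; exact norm_nonneg _)

lemma aux_le_numRad (A : H →L[ℂ] H) {x : H} (hx : ‖x‖ = 1) :
    ‖(inner ℂ (A x) x : ℂ)‖ ≤ numRad A := by
  apply le_csSup
  · refine ⟨‖A‖, fun t ht => ?_⟩
    obtain ⟨y, hy, rfl⟩ := ht
    calc ‖(inner ℂ (A y) y : ℂ)‖ ≤ ‖A y‖ * ‖y‖ := norm_inner_le_norm _ _
      _ ≤ ‖A‖ * ‖y‖ * ‖y‖ := by
          gcongr
          exact A.le_opNorm y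
      _ = ‖A‖ := by rw [hy]; ring
  · exact ⟨x, hx, rfl⟩

lemma aux_numRad_le (A : H →L[ℂ] H) {c : ℝ} (hc : 0 ≤ c)
    (h : ∀ x : H, ‖x‖ = 1 → ‖(inner ℂ (A x) x : ℂ)‖ ≤ c) : numRad A ≤ c :=
  Real.sSup_le (fun t ht => by obtain ⟨x, hx, rfl⟩ := ht; exact h x hx) hc

end Aux

/-- `4r`-th power numerical radius bound for a single operator with parameter `β ≥ 0`. -/
theorem numRad_pow_four_r_bound {H : Type*}
    [NormedAddCommGroup H] [InnerProductSpace ℂ H] [CompleteSpace H]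
    (M : H →L[ℂ] H) (β : ℝ) (hβ : 0 ≤ β) (r : ℝ) (hr : 1 ≤ r) :
    numRad M ^ (4 * r) ≤
      1 / 16 * ((2 * β + 1) / (β + 1))
          * ‖cfc (fun t : ℝ => t ^ (2 * r)) (absOp M)
              + cfc (fun t : ℝ => t ^ (2 * r)) (absOp (adjoint M))‖ ^ 2
        + 1 / 8 * ((2 * β + 3) / (β + 1))
          * ‖cfc (fun t : ℝ => t ^ (2 * r)) (absOp M)
              + cfc (fun t : ℝ => t ^ (2 * r)) (absOp (adjoint M))‖
          * numRad (M ^ 2) ^ r := by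
  classical
  set A1 : H →L[ℂ] H := cfc (fun t : ℝ => t ^ (2 * r)) (absOp M) with hA1
  set A2 : H →L[ℂ] H := cfc (fun t : ℝ => t ^ (2 * r)) (absOp (adjoint M)) with hA2
  set n : ℝ := ‖A1 + A2‖ with hn
  set W : ℝ := numRad (M ^ 2) ^ r with hW
  have hr0 : (0:ℝ) < r := lt_of_lt_of_le one_pos hr
  have hn0 : (0:ℝ) ≤ n := norm_nonneg _
  have hW0 : 0 ≤ W := Real.rpow_nonneg (aux_numRad_nonneg _) r
  -- inner ℂ product data for a unit vector
  have habx : ∀ x : H, ‖x‖ = 1 →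
      ‖M x‖ ^ (2*r) ≤ RCLike.re (inner ℂ (A1 x) x : ℂ) ∧
      ‖adjoint M x‖ ^ (2*r) ≤ RCLike.re (inner ℂ (A2 x) x : ℂ) ∧
      RCLike.re (inner ℂ (A1 x) x : ℂ) + RCLike.re (inner ℂ (A2 x) x : ℂ) ≤ n := by
    intro x hx
    refine ⟨aux_norm_apply_rpow_le M hr hx, aux_norm_apply_rpow_le (adjoint M) hr hx, ?_⟩
    have h1 : RCLike.re (inner ℂ (A1 x) x : ℂ) + RCLike.re (inner ℂ (A2 x) x : ℂ)
        = RCLike.re (inner ℂ ((A1 + A2) x) x : ℂ) := by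
      simp [ContinuousLinearMap.add_apply, inner_add_left]
    rw [h1]
    calc RCLike.re (inner ℂ ((A1 + A2) x) x : ℂ) ≤ ‖(inner ℂ ((A1 + A2) x) x : ℂ)‖ :=
          RCLike.re_le_norm _
      _ ≤ ‖(A1 + A2) x‖ * ‖x‖ := norm_inner_le_norm _ _
      _ ≤ ‖A1 + A2‖ * ‖x‖ * ‖x‖ := by gcongr; exact (A1+A2).le_opNorm x
      _ = n := by rw [hx, hn]; ring
  -- p = (‖Mx‖‖M*x‖)^r ≤ n/2 for unit x
  have hp_le : ∀ x : H, ‖x‖ = 1 → (‖M x‖ * ‖adjoint M x‖) ^ r ≤ n / 2 ∧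
      (‖M x‖ * ‖adjoint M x‖) ^ r * (‖M x‖ * ‖adjoint M x‖) ^ r ≤
        RCLike.re (inner ℂ (A1 x) x : ℂ) * RCLike.re (inner ℂ (A2 x) x : ℂ) := by
    intro x hx
    obtain ⟨h1, h2, h3⟩ := habx x hx
    have ha0 : 0 ≤ RCLike.re (inner ℂ (A1 x) x : ℂ) :=
      le_trans (Real.rpow_nonneg (norm_nonneg _) _) h1
    have hb0 : 0 ≤ RCLike.re (inner ℂ (A2 x) x : ℂ) :=
      le_trans (Real.rpow_nonneg (norm_nonneg _) _) h2
    have hpp : (‖M x‖ * ‖adjoint M x‖) ^ r * (‖M x‖ * ‖adjoint M x‖) ^ r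
        = ‖M x‖ ^ (2*r) * ‖adjoint M x‖ ^ (2*r) := by
      rw [← Real.rpow_add' (mul_nonneg (norm_nonneg _) (norm_nonneg _)) (by linarith),
        show r + r = 2*r by ring, Real.mul_rpow (norm_nonneg _) (norm_nonneg _)]
    have h4 : (‖M x‖ * ‖adjoint M x‖) ^ r * (‖M x‖ * ‖adjoint M x‖) ^ r ≤
        RCLike.re (inner ℂ (A1 x) x : ℂ) * RCLike.re (inner ℂ (A2 x) x : ℂ) := by
      rw [hpp]
      exact mul_le_mul h1 h2 (Real.rpow_nonneg (norm_nonneg _) _) ha0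
    refine ⟨?_, h4⟩
    have hp0 : 0 ≤ (‖M x‖ * ‖adjoint M x‖) ^ r :=
      Real.rpow_nonneg (mul_nonneg (norm_nonneg _) (norm_nonneg _)) _
    have habn : RCLike.re (inner ℂ (A1 x) x : ℂ) * RCLike.re (inner ℂ (A2 x) x : ℂ) ≤ (n/2)^2 := by
      nlinarith [sq_nonneg (RCLike.re (inner ℂ (A1 x) x : ℂ) - RCLike.re (inner ℂ (A2 x) x : ℂ))]
    have hsq : ((‖M x‖ * ‖adjoint M x‖) ^ r)^2 ≤ (n/2)^2 := by
      rw [sq]; exact le_trans h4 habn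
    have hn2 : (0:ℝ) ≤ n/2 := by
      have : (0:ℝ) ≤ n := norm_nonneg _
      linarith
    calc (‖M x‖ * ‖adjoint M x‖) ^ r
        = Real.sqrt (((‖M x‖ * ‖adjoint M x‖) ^ r)^2) := (Real.sqrt_sq hp0).symm
      _ ≤ Real.sqrt ((n/2)^2) := Real.sqrt_le_sqrt hsq
      _ = n/2 := Real.sqrt_sq hn2
  -- v and its relation to M^2
  have hv_eq : ∀ x : H, ‖(inner ℂ ((M ^ 2) x) x : ℂ)‖ = ‖(inner ℂ (M x) (adjoint M x) : ℂ)‖ := by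
    intro x
    have : (M ^ 2) x = M (M x) := by
      rw [pow_two]; exact ContinuousLinearMap.mul_apply M M x
    rw [this, ← adjoint_inner_right M (M x) x]
  -- W ≤ n/2
  have hWn : W ≤ n / 2 := by
    have hn2 : (0:ℝ) ≤ n/2 := by linarith
    have hv : ∀ x : H, ‖x‖ = 1 → ‖(inner ℂ ((M ^ 2) x) x : ℂ)‖ ≤ (n/2) ^ r⁻¹ := by
      intro x hx
      have hvu : ‖(inner ℂ ((M ^ 2) x) x : ℂ)‖ ≤ ‖M x‖ * ‖adjoint M x‖ := by
        rw [hv_eq x]; exact norm_inner_le_norm _ _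
      have h5 : (‖(inner ℂ ((M ^ 2) x) x : ℂ)‖) ^ r ≤ n/2 :=
        le_trans (Real.rpow_le_rpow (norm_nonneg _) hvu hr0.le) (hp_le x hx).1
      exact aux_rpow_le_of_rpow_le hr0 (norm_nonneg _) h5
    have h6 : numRad (M ^ 2) ≤ (n/2) ^ r⁻¹ :=
      aux_numRad_le _ (Real.rpow_nonneg hn2 _) hv
    rw [hW]
    exact aux_rpow_le_of_le_rpow hr0 (aux_numRad_nonneg _) hn2 h6
  -- the main per-vector estimate
  have key : ∀ x : H, ‖x‖ = 1 → ‖(inner ℂ (M x) x : ℂ)‖ ^ (4*r) ≤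
      1 / 16 * ((2 * β + 1) / (β + 1)) * n ^ 2
        + 1 / 8 * ((2 * β + 3) / (β + 1)) * n * W := by
    intro x hx
    obtain ⟨h1, h2, h3⟩ := habx x hx
    obtain ⟨hpn, hp2⟩ := hp_le x hx
    set s : ℝ := ‖(inner ℂ (M x) x : ℂ)‖ with hs
    set u : ℝ := ‖M x‖ * ‖adjoint M x‖ with hu
    set v : ℝ := ‖(inner ℂ ((M ^ 2) x) x : ℂ)‖ with hv
    have hs0 : 0 ≤ s := norm_nonneg _
    have hu0 : 0 ≤ u := mul_nonneg (norm_nonneg _) (norm_nonneg _)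
    have hv0 : 0 ≤ v := norm_nonneg _
    -- Buzano
    have hbz : s ^ (2:ℕ) ≤ (u + v) / 2 := by
      have heq : (inner ℂ x (adjoint M x) : ℂ) = inner ℂ (M x) x := adjoint_inner_right M x x
      have hb := aux_buzano_s10 hx (M x) (adjoint M x)
      rw [heq] at hb
      rw [norm_mul] at hb
      have hv' : ‖(inner ℂ (M x) (adjoint M x) : ℂ)‖ = v := (hv_eq x).symm
      rw [hv'] at hb
      calc s ^ (2:ℕ) = s * s := sq s
        _ ≤ (u + v)/2 := by rw [hs]; exact hb
    have hq : v ^ r ≤ W := Real.rpow_le_rpow hv0 (aux_le_numRad _ hx) hr0.le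
    have hq0 : 0 ≤ v ^ r := Real.rpow_nonneg hv0 _
    have hp0 : 0 ≤ u ^ r := Real.rpow_nonneg hu0 _
    -- s^{2r} ≤ (u^r + v^r)/2
    have hs2r : s ^ (2*r) ≤ (u ^ r + v ^ r) / 2 := by
      calc s ^ (2*r) = (s ^ (2:ℝ)) ^ r := by rw [← Real.rpow_mul hs0]
        _ ≤ ((u+v)/2) ^ r := by
            apply Real.rpow_le_rpow (Real.rpow_nonneg hs0 _) _ hr0.le
            rw [Real.rpow_two]; exact_mod_cast hbz
        _ ≤ (u ^ r + v ^ r)/2 := aux_two_point hu0 hv0 hr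
    have hs2r0 : 0 ≤ s ^ (2*r) := Real.rpow_nonneg hs0 _
    have hs4r : s ^ (4*r) = (s ^ (2*r)) ^ (2:ℕ) := by
      rw [← Real.rpow_two, ← Real.rpow_mul hs0]; ring_nf
    -- the two basic bounds
    have ha0 : 0 ≤ RCLike.re (inner ℂ (A1 x) x : ℂ) :=
      le_trans (Real.rpow_nonneg (norm_nonneg _) _) h1
    have hb0 : 0 ≤ RCLike.re (inner ℂ (A2 x) x : ℂ) :=
      le_trans (Real.rpow_nonneg (norm_nonneg _) _) h2
    have htsq : s ^ (2*r) * s ^ (2*r) ≤ ((u^r + v^r)/2) * ((u^r + v^r)/2) :=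
      mul_self_le_mul_self hs2r0 hs2r
    have hpq' : u^r * v^r ≤ (n/2) * W :=
      mul_le_mul hpn hq hq0 (by linarith)
    have hqq : v^r * v^r ≤ (n/2) * W := by
      have h7 : v^r * v^r ≤ W * W := mul_le_mul hq hq hq0 hW0
      have h8 : W * W ≤ (n/2) * W := mul_le_mul_of_nonneg_right hWn hW0
      linarith
    have habn : RCLike.re (inner ℂ (A1 x) x : ℂ) * RCLike.re (inner ℂ (A2 x) x : ℂ) ≤ (n/2)^2 := by
      nlinarith [sq_nonneg (RCLike.re (inner ℂ (A1 x) x : ℂ) - RCLike.re (inner ℂ (A2 x) x : ℂ))]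
    have hp2n : u^r * u^r ≤ (n/2)^2 := le_trans hp2 habn
    have E0 : s ^ (4*r) ≤ n^2/16 + 3/8 * n * W := by
      rw [hs4r]
      nlinarith [htsq, hpq', hqq, hp2n]
    have Einf : s ^ (4*r) ≤ n^2/8 + n * W / 4 := by
      rw [hs4r]
      nlinarith [htsq, hpq', hqq, hp2n, sq_nonneg (u^r - v^r)]
    have hb1 : (0:ℝ) < β + 1 := by linarith
    rw [show 1 / 16 * ((2 * β + 1) / (β + 1)) * n ^ 2
        + 1 / 8 * ((2 * β + 3) / (β + 1)) * n * W
        = ((n^2/16 + 3/8*n*W) + β * (n^2/8 + n*W/4)) / (β + 1) by field_simp; ring]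
    rw [le_div_iff₀ hb1]
    nlinarith [E0, Einf, hβ]
  -- conclude
  have hR : 0 ≤ 1 / 16 * ((2 * β + 1) / (β + 1)) * n ^ 2
      + 1 / 8 * ((2 * β + 3) / (β + 1)) * n * W := by
    have c1 : (0:ℝ) ≤ (2 * β + 1) / (β + 1) := div_nonneg (by linarith) (by linarith)
    have c2 : (0:ℝ) ≤ (2 * β + 3) / (β + 1) := div_nonneg (by linarith) (by linarith)
    have := sq_nonneg n
    positivity
  have h4r : (0:ℝ) < 4*r := by linarith
  have hfin : numRad M ≤ (1 / 16 * ((2 * β + 1) / (β + 1)) * n ^ 2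
      + 1 / 8 * ((2 * β + 3) / (β + 1)) * n * W) ^ (4*r)⁻¹ := by
    apply aux_numRad_le _ (Real.rpow_nonneg hR _)
    intro x hx
    exact aux_rpow_le_of_rpow_le h4r (norm_nonneg _) (key x hx)
  exact aux_rpow_le_of_le_rpow h4r (aux_numRad_nonneg _) hR hfin
end

section
/- Let H be a complex Hilbert space, A₁, A₂, B₁, B₂, X₁, X₂ ∈ B(H), let r ≥ 2 be a real number, and let α ∈ [0,1]. Let 𝔸, 𝔹, 𝕐 be the operators on H ⊕ H given by 𝔸(x, y) = (A₁ y, A₂ x), 𝔹(x, y) = (B₁ y, B₂ x), 𝕐(x, y) = (X₁ y, X₂ x). Then ω( |𝔸|^{α} · 𝕐 · |𝔹|^{1−α} )^{r} ≤ max{ ‖X₁‖^{r}, ‖X₂‖^{r} } · max{ ‖ α·|A₂|^{r} + (1−α)·|B₂|^{r} ‖, ‖ α·|A₁|^{r} + (1−α)·|B₁|^{r} ‖ }, where all real powers of positive operators are defined via the continuous functional calculus. -/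
open ContinuousLinearMap

set_option linter.unusedSectionVars false
set_option maxHeartbeats 1000000

section DiagAux

variable {H : Type*} [NormedAddCommGroup H] [InnerProductSpace ℂ H] [CompleteSpace H]

/-- The diagonal operator `diag(S, T)` on `H ⊕₂ H`. -/
noncomputable def diagOp (S T : H →L[ℂ] H) :
    WithLp 2 (H × H) →L[ℂ] WithLp 2 (H × H) :=
  ((WithLp.prodContinuousLinearEquiv 2 ℂ H H).symm.toContinuousLinearMap.comp
    ((S.prodMap T).comp (WithLp.prodContinuousLinearEquiv 2 ℂ H H).toContinuousLinearMap))

lemma diagOp_apply (S T : H →L[ℂ] H) (z : WithLp 2 (H × H)) :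
    diagOp S T z = (WithLp.equiv 2 (H × H)).symm (S z.fst, T z.snd) := rfl

lemma diagOp_adjoint (S T : H →L[ℂ] H) :
    diagOp (adjoint S) (adjoint T) = adjoint (diagOp S T) := by
  rw [eq_adjoint_iff]; intro x y
  simp [diagOp_apply, WithLp.prod_inner_apply, adjoint_inner_left]

/-- `diagOp` as a star algebra homomorphism from the product C*-algebra. -/
noncomputable def diagHom :
    ((H →L[ℂ] H) × (H →L[ℂ] H)) →⋆ₐ[ℂ] (WithLp 2 (H × H) →L[ℂ] WithLp 2 (H × H)) where
  toFun p := diagOp p.1 p.2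
  map_one' := by ext z; rfl
  map_mul' p q := by ext z; rfl
  map_zero' := by ext z; rfl
  map_add' p q := by ext z; rfl
  commutes' c := by ext z; rfl
  map_star' p := by
    simp only [Prod.fst_star, Prod.snd_star, star_eq_adjoint]
    exact diagOp_adjoint p.1 p.2

lemma sq_le_mul_sq {a b c : ℝ} (hb : 0 ≤ b) (hc : 0 ≤ c) (h : a ^ 2 ≤ b ^ 2 * c ^ 2) :
    a ≤ b * c := by
  rcases le_or_gt a 0 with h0 | h0
  · exact h0.trans (mul_nonneg hb hc)
  · nlinarith [mul_nonneg hb hc]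

lemma norm_diagOp_le (S T : H →L[ℂ] H) : ‖diagOp S T‖ ≤ max ‖S‖ ‖T‖ := by
  refine opNorm_le_bound _ (le_max_iff.2 (Or.inl (norm_nonneg S))) fun z => ?_
  refine sq_le_mul_sq (le_max_iff.2 (Or.inl (norm_nonneg S))) (norm_nonneg z) ?_
  have h1 : ‖diagOp S T z‖ ^ 2 = ‖S z.fst‖ ^ 2 + ‖T z.snd‖ ^ 2 := by
    rw [diagOp_apply, WithLp.prod_norm_sq_eq_of_L2]; rfl
  have h2 : ‖z‖ ^ 2 = ‖z.fst‖ ^ 2 + ‖z.snd‖ ^ 2 := WithLp.prod_norm_sq_eq_of_L2 z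
  have hS : ‖S z.fst‖ ≤ max ‖S‖ ‖T‖ * ‖z.fst‖ :=
    (S.le_opNorm z.fst).trans (by gcongr; exact le_max_left _ _)
  have hT : ‖T z.snd‖ ≤ max ‖S‖ ‖T‖ * ‖z.snd‖ :=
    (T.le_opNorm z.snd).trans (by gcongr; exact le_max_right _ _)
  have h3 : ‖S z.fst‖ ^ 2 ≤ (max ‖S‖ ‖T‖) ^ 2 * ‖z.fst‖ ^ 2 := by
    rw [← mul_pow]; exact pow_le_pow_left₀ (norm_nonneg _) hS 2
  have h4 : ‖T z.snd‖ ^ 2 ≤ (max ‖S‖ ‖T‖) ^ 2 * ‖z.snd‖ ^ 2 := by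
    rw [← mul_pow]; exact pow_le_pow_left₀ (norm_nonneg _) hT 2
  rw [h1, h2]; ring_nf; nlinarith [h3, h4]

lemma continuous_diagHom : Continuous (diagHom (H := H)) :=
  AddMonoidHomClass.continuous_of_bound (diagHom (H := H)) 1 (fun p => by
    rw [one_mul, Prod.norm_def]
    exact norm_diagOp_le p.1 p.2)

/-- `Prod.fst` as a star algebra hom. -/
def fstSH : ((H →L[ℂ] H) × (H →L[ℂ] H)) →⋆ₐ[ℂ] (H →L[ℂ] H) :=
  { AlgHom.fst ℂ (H →L[ℂ] H) (H →L[ℂ] H) with map_star' := fun _ => rfl }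

/-- `Prod.snd` as a star algebra hom. -/
def sndSH : ((H →L[ℂ] H) × (H →L[ℂ] H)) →⋆ₐ[ℂ] (H →L[ℂ] H) :=
  { AlgHom.snd ℂ (H →L[ℂ] H) (H →L[ℂ] H) with map_star' := fun _ => rfl }

noncomputable instance prodCFCReal :
    ContinuousFunctionalCalculus ℝ ((H →L[ℂ] H) × (H →L[ℂ] H)) IsSelfAdjoint :=
  IsSelfAdjoint.instContinuousFunctionalCalculus

lemma cfc_prod (f : ℝ → ℝ) (hf : Continuous f) {S T : H →L[ℂ] H}
    (hS : IsSelfAdjoint S) (hT : IsSelfAdjoint T) :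
    cfc f ((S, T) : (H →L[ℂ] H) × (H →L[ℂ] H)) = (cfc f S, cfc f T) := by
  have hST : IsSelfAdjoint ((S, T) : (H →L[ℂ] H) × (H →L[ℂ] H)) := by
    rw [IsSelfAdjoint, Prod.star_def, Prod.mk.injEq]
    exact ⟨hS, hT⟩
  have h1 := StarAlgHomClass.map_cfc (fstSH (H := H)) f (S, T) hf.continuousOn
    continuous_fst hST hS
  have h2 := StarAlgHomClass.map_cfc (sndSH (H := H)) f (S, T) hf.continuousOn
    continuous_snd hST hT
  rw [show fstSH (H := H) (S, T) = S from rfl] at h1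
  rw [show sndSH (H := H) (S, T) = T from rfl] at h2
  exact Prod.ext h1 h2

lemma isSelfAdjoint_diagOp {S T : H →L[ℂ] H} (hS : IsSelfAdjoint S) (hT : IsSelfAdjoint T) :
    IsSelfAdjoint (diagOp S T) := by
  rw [IsSelfAdjoint, star_eq_adjoint, ← diagOp_adjoint]
  rw [← star_eq_adjoint, ← star_eq_adjoint, hS.star_eq, hT.star_eq]

lemma diag_cfc (f : ℝ → ℝ) (hf : Continuous f) {S T : H →L[ℂ] H}
    (hS : IsSelfAdjoint S) (hT : IsSelfAdjoint T) :
    cfc f (diagOp S T) = diagOp (cfc f S) (cfc f T) := by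
  have hST : IsSelfAdjoint ((S, T) : (H →L[ℂ] H) × (H →L[ℂ] H)) := by
    rw [IsSelfAdjoint, Prod.star_def, Prod.mk.injEq]
    exact ⟨hS, hT⟩
  have h := StarAlgHomClass.map_cfc (diagHom (H := H)) f (S, T) hf.continuousOn
    continuous_diagHom hST (isSelfAdjoint_diagOp hS hT)
  have h' : diagHom (cfc f (S, T)) = cfc f (diagOp S T) := h
  rw [cfc_prod f hf hS hT] at h'
  exact h'.symm

lemma diagOp_smul (c : ℝ) (S T : H →L[ℂ] H) :
    c • diagOp S T = diagOp (c • S) (c • T) := by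
  ext z; rfl

lemma diagOp_add (S T S' T' : H →L[ℂ] H) :
    diagOp S T + diagOp S' T' = diagOp (S + S') (T + T') := by
  ext z; rfl

end DiagAux

section McCarthy

variable {E : Type*} [NormedAddCommGroup E] [InnerProductSpace ℂ E] [CompleteSpace E]

lemma continuous_rpow_const {q : ℝ} (hq : 0 ≤ q) : Continuous fun t : ℝ => t ^ q :=
  continuous_iff_continuousAt.2 fun x => Real.continuousAt_rpow_const x q (Or.inr hq)

lemma young_aux {q t ε : ℝ} (hq0 : 0 < q) (hq1 : q ≤ 1) (ht : 0 ≤ t) (hε : 0 < ε) :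
    t ^ q ≤ q * ε ^ (q - 1) * t + (1 - q) * ε ^ q := by
  have h := Real.geom_mean_le_arith_mean2_weighted hq0.le (by linarith : (0:ℝ) ≤ 1 - q)
    ht hε.le (by ring)
  have hεq : (0:ℝ) < ε ^ (q - 1) := Real.rpow_pos_of_pos hε _
  have key : t ^ q = (t ^ q * ε ^ (1 - q)) * ε ^ (q - 1) := by
    rw [mul_assoc, ← Real.rpow_add hε]
    norm_num
  rw [key]
  calc (t ^ q * ε ^ (1 - q)) * ε ^ (q - 1) ≤ (q * t + (1 - q) * ε) * ε ^ (q - 1) := by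
        exact mul_le_mul_of_nonneg_right h hεq.le
    _ = q * ε ^ (q - 1) * t + (1 - q) * (ε ^ (1:ℝ) * ε ^ (q - 1)) := by
        rw [Real.rpow_one]; ring
    _ = q * ε ^ (q - 1) * t + (1 - q) * ε ^ q := by
        rw [← Real.rpow_add hε]; norm_num

lemma inner_re_le_of_le {A B : E →L[ℂ] E} (h : A ≤ B) (z : E) :
    (inner ℂ (A z) z : ℂ).re ≤ (inner ℂ (B z) z : ℂ).re := by
  have hp : (B - A).IsPositive := (le_def A B).mp h
  have := hp.re_inner_nonneg_left z
  simp only [sub_apply, inner_sub_left] at this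
  simp only [RCLike.re_to_complex] at this ⊢
  rw [Complex.sub_re] at this
  linarith

lemma inner_re_nonneg_of_nonneg {A : E →L[ℂ] E} (h : 0 ≤ A) (z : E) :
    0 ≤ (inner ℂ (A z) z : ℂ).re := by
  have hp : A.IsPositive := (nonneg_iff_isPositive A).mp h
  simpa using hp.re_inner_nonneg_left z

/-- McCarthy-type inequality via CFC. -/
lemma mccarthy (Q : E →L[ℂ] E) (hQ : 0 ≤ Q) {q : ℝ} (hq0 : 0 < q) (hq1 : q ≤ 1)
    (z : E) (hz : ‖z‖ = 1) :
    (inner ℂ ((cfc (fun t : ℝ => t ^ q) Q) z) z : ℂ).re ≤ ((inner ℂ (Q z) z : ℂ).re) ^ q := by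
  have hQsa : IsSelfAdjoint Q := .of_nonneg hQ
  have hspec : ∀ x ∈ spectrum ℝ Q, (0:ℝ) ≤ x := fun x hx =>
    spectrum_nonneg_of_nonneg hQ hx
  set m : ℝ := (inner ℂ (Q z) z : ℂ).re with hm
  have hm0 : 0 ≤ m := inner_re_nonneg_of_nonneg hQ z
  have key : ∀ ε : ℝ, 0 < ε →
      (inner ℂ ((cfc (fun t : ℝ => t ^ q) Q) z) z : ℂ).re ≤
        q * ε ^ (q - 1) * m + (1 - q) * ε ^ q := by
    intro ε hε
    have hop : cfc (fun t : ℝ => t ^ q) Q ≤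
        (q * ε ^ (q - 1)) • Q + ((1 - q) * ε ^ q) • (1 : E →L[ℂ] E) := by
      have h1 : cfc (fun t : ℝ => t ^ q) Q ≤
          cfc (fun t : ℝ => q * ε ^ (q - 1) * t + (1 - q) * ε ^ q) Q := by
        refine cfc_mono (fun x hx => young_aux hq0 hq1 (hspec x hx) hε)
          ((continuous_rpow_const hq0.le).continuousOn) (by fun_prop)
      refine h1.trans_eq ?_
      rw [cfc_add (a := Q) (fun t : ℝ => q * ε ^ (q - 1) * t) (fun _ => (1 - q) * ε ^ q)
        (by fun_prop) (by fun_prop)]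
      rw [cfc_const ((1 - q) * ε ^ q) Q hQsa]
      rw [show (fun t : ℝ => q * ε ^ (q - 1) * t) = (fun t : ℝ => (q * ε ^ (q - 1)) * t)
        from rfl]
      rw [cfc_const_mul_id (q * ε ^ (q - 1)) Q hQsa]
      rw [Algebra.algebraMap_eq_smul_one]
    have := inner_re_le_of_le hop z
    refine this.trans_eq ?_
    simp only [add_apply, smul_apply, ContinuousLinearMap.one_apply, inner_add_left]
    rw [Complex.add_re]
    have e1 : (inner ℂ ((q * ε ^ (q - 1)) • Q z) z : ℂ).re = q * ε ^ (q - 1) * m := by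
      rw [RCLike.real_smul_eq_coe_smul (K := ℂ), inner_smul_left]
      simp [hm, Complex.mul_re]
    have e2 : (inner ℂ ((((1 : ℝ) - q) * ε ^ q) • z) z : ℂ).re = (1 - q) * ε ^ q := by
      rw [RCLike.real_smul_eq_coe_smul (K := ℂ), inner_smul_left]
      have hzz : (inner ℂ z z : ℂ) = 1 := by
        rw [inner_self_eq_norm_sq_to_K, hz]
        norm_num
      rw [hzz]
      simp [Complex.mul_re]
    rw [e1, e2]
  rcases eq_or_lt_of_le hm0 with hm' | hm'
  · rw [← hm', Real.zero_rpow hq0.ne']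
    have htend : Filter.Tendsto (fun ε : ℝ => (1 - q) * ε ^ q) (nhdsWithin 0 (Set.Ioi 0))
        (nhds 0) := by
      have h0 : Filter.Tendsto (fun ε : ℝ => ε ^ q) (nhds 0) (nhds 0) := by
        have := (Real.continuousAt_rpow_const 0 q (Or.inr hq0.le)).tendsto
        rwa [Real.zero_rpow hq0.ne'] at this
      have h1 := h0.const_mul (1 - q)
      rw [mul_zero] at h1
      exact h1.mono_left nhdsWithin_le_nhds
    refine ge_of_tendsto htend ?_
    filter_upwards [self_mem_nhdsWithin] with ε hε
    have h := key ε hε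
    rw [← hm'] at h
    simpa using h
  · have h := key m hm'
    have hmm : m ^ (q - 1) * m ^ (1:ℝ) = m ^ q := by
      rw [← Real.rpow_add hm']; norm_num
    calc (inner ℂ ((cfc (fun t : ℝ => t ^ q) Q) z) z : ℂ).re
        ≤ q * m ^ (q - 1) * m + (1 - q) * m ^ q := h
      _ = q * (m ^ (q - 1) * m ^ (1:ℝ)) + (1 - q) * m ^ q := by rw [Real.rpow_one]; ring
      _ = m ^ q := by rw [hmm]; ring

lemma cfc_rpow_norm_apply_sq_le (P : E →L[ℂ] E) (hP : 0 ≤ P) {β r : ℝ}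
    (hβ0 : 0 ≤ β) (hβ1 : β ≤ 1) (hr : 2 ≤ r) (z : E) (hz : ‖z‖ = 1) :
    ‖cfc (fun t : ℝ => t ^ β) P z‖ ^ 2 ≤
      ((inner ℂ ((cfc (fun t : ℝ => t ^ r) P) z) z : ℂ).re) ^ (2 * β / r) := by
  have hr0 : (0:ℝ) < r := lt_of_lt_of_le two_pos hr
  have hPsa : IsSelfAdjoint P := .of_nonneg hP
  have hspec : ∀ x ∈ spectrum ℝ P, (0:ℝ) ≤ x := fun x hx => spectrum_nonneg_of_nonneg hP hx
  have hFsa : IsSelfAdjoint (cfc (fun t : ℝ => t ^ β) P) := cfc_predicate _ _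
  have hnorm : ‖cfc (fun t : ℝ => t ^ β) P z‖ ^ 2
      = (inner ℂ ((cfc (fun t : ℝ => t ^ β) P * cfc (fun t : ℝ => t ^ β) P) z) z : ℂ).re := by
    rw [ContinuousLinearMap.mul_apply]
    have h1 : (inner ℂ ((cfc (fun t : ℝ => t ^ β) P) ((cfc (fun t : ℝ => t ^ β) P) z)) z : ℂ)
        = inner ℂ ((cfc (fun t : ℝ => t ^ β) P) z) ((cfc (fun t : ℝ => t ^ β) P) z) := by
      conv_lhs => rw [← hFsa.adjoint_eq]
      rw [adjoint_inner_left, hFsa.adjoint_eq]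
    rw [h1, inner_self_eq_norm_sq_to_K]
    rw [← RCLike.ofReal_pow]
    exact (Complex.ofReal_re _).symm
  rcases eq_or_lt_of_le hβ0 with hβ' | hβ'
  · rw [← hβ']
    have hfun : (fun t : ℝ => t ^ (0:ℝ)) = fun _ : ℝ => (1:ℝ) :=
      funext fun t => Real.rpow_zero t
    rw [hfun, cfc_const 1 P hPsa, map_one, ContinuousLinearMap.one_apply, hz]
    norm_num
  · set q : ℝ := 2 * β / r with hq
    have hq0 : 0 < q := by positivity
    have hq1 : q ≤ 1 := by
      rw [hq, div_le_one hr0]; linarith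
    have hQ : (0:_) ≤ cfc (fun t : ℝ => t ^ r) P :=
      cfc_nonneg (fun x hx => Real.rpow_nonneg (hspec x hx) r)
    have step1 : cfc (fun t : ℝ => t ^ β) P * cfc (fun t : ℝ => t ^ β) P
        = cfc (fun t : ℝ => t ^ (β * 2)) P := by
      rw [← cfc_mul _ _ P ((continuous_rpow_const hβ0).continuousOn)
        ((continuous_rpow_const hβ0).continuousOn)]
      apply cfc_congr
      intro t ht
      have ht' := hspec t ht
      show t ^ β * t ^ β = t ^ (β * 2)
      rw [Real.rpow_mul ht', show ((2:ℝ)) = ((2:ℕ):ℝ) by norm_num, Real.rpow_natCast, pow_two]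
    have step2 : cfc (fun t : ℝ => t ^ (β * 2)) P
        = cfc (fun t : ℝ => t ^ q) (cfc (fun t : ℝ => t ^ r) P) := by
      rw [← cfc_comp' (fun t : ℝ => t ^ q) (fun t : ℝ => t ^ r) P
        ((continuous_rpow_const hq0.le).continuousOn) ((continuous_rpow_const hr0.le).continuousOn)]
      apply cfc_congr
      intro t ht
      have ht' := hspec t ht
      show t ^ (β * 2) = (t ^ r) ^ q
      rw [← Real.rpow_mul ht']
      congr 1
      rw [hq]; field_simp
    rw [hnorm, step1, step2]
    exact mccarthy _ hQ hq0 hq1 z hz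

end McCarthy

section More
variable {E : Type*} [NormedAddCommGroup E] [InnerProductSpace ℂ E] [CompleteSpace E]

lemma isSelfAdjoint_adjoint_comp (A : E →L[ℂ] E) : IsSelfAdjoint ((adjoint A).comp A) := by
  rw [IsSelfAdjoint, star_eq_adjoint, adjoint_comp, adjoint_adjoint]

lemma absOp_nonneg (A : E →L[ℂ] E) : 0 ≤ absOp A :=
  cfc_nonneg (fun x _ => Real.sqrt_nonneg x)

end More

/-- Theorem 2.26 (`Theorem 2.26`): numerical radius bound for `|𝔸|^α · 𝕐 · |𝔹|^{1−α}` where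
`𝔸, 𝔹, 𝕐` are off-diagonal `2 × 2` operator matrices, `r ≥ 2` and `α ∈ [0,1]`. -/
theorem offdiag_weighted_product_numRad_bound {H : Type*}
    [NormedAddCommGroup H] [InnerProductSpace ℂ H] [CompleteSpace H]
    (A₁ A₂ B₁ B₂ X₁ X₂ : H →L[ℂ] H) (r : ℝ) (hr : 2 ≤ r)
    (α : ℝ) (hα : α ∈ Set.Icc (0 : ℝ) 1)
    (𝔸 𝔹 𝕐 : WithLp 2 (H × H) →L[ℂ] WithLp 2 (H × H))
    (h𝔸 : ∀ x y : H, 𝔸 ((WithLp.equiv 2 (H × H)).symm (x, y))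
        = (WithLp.equiv 2 (H × H)).symm (A₁ y, A₂ x))
    (h𝔹 : ∀ x y : H, 𝔹 ((WithLp.equiv 2 (H × H)).symm (x, y))
        = (WithLp.equiv 2 (H × H)).symm (B₁ y, B₂ x))
    (h𝕐 : ∀ x y : H, 𝕐 ((WithLp.equiv 2 (H × H)).symm (x, y))
        = (WithLp.equiv 2 (H × H)).symm (X₁ y, X₂ x)) :
    numRad (cfc (fun t : ℝ => t ^ α) (absOp 𝔸) * 𝕐
        * cfc (fun t : ℝ => t ^ (1 - α)) (absOp 𝔹)) ^ r ≤
      max (‖X₁‖ ^ r) (‖X₂‖ ^ r)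
        * max (‖α • cfc (fun t : ℝ => t ^ r) (absOp A₂)
                + (1 - α) • cfc (fun t : ℝ => t ^ r) (absOp B₂)‖)
              (‖α • cfc (fun t : ℝ => t ^ r) (absOp A₁)
                + (1 - α) • cfc (fun t : ℝ => t ^ r) (absOp B₁)‖) := by
  obtain ⟨hα0, hα1⟩ := hα
  have hr0 : (0:ℝ) < r := lt_of_lt_of_le two_pos hr
  set M₂ := α • cfc (fun t : ℝ => t ^ r) (absOp A₂)
      + (1 - α) • cfc (fun t : ℝ => t ^ r) (absOp B₂) with hM₂
  set M₁ := α • cfc (fun t : ℝ => t ^ r) (absOp A₁)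
      + (1 - α) • cfc (fun t : ℝ => t ^ r) (absOp B₁) with hM₁
  set C : ℝ := max (‖X₁‖ ^ r) (‖X₂‖ ^ r) * max ‖M₂‖ ‖M₁‖ with hCdef
  have hXr0 : 0 ≤ max (‖X₁‖ ^ r) (‖X₂‖ ^ r) :=
    le_max_iff.2 (Or.inl (Real.rpow_nonneg (norm_nonneg _) r))
  have hC0 : 0 ≤ C := mul_nonneg hXr0 (le_max_iff.2 (Or.inl (norm_nonneg _)))
  -- off-diagonal squares are diagonal
  have hAA : ∀ (T₁ T₂ : H →L[ℂ] H) (𝕋 : WithLp 2 (H × H) →L[ℂ] WithLp 2 (H × H)),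
      (∀ x y : H, 𝕋 ((WithLp.equiv 2 (H × H)).symm (x, y))
        = (WithLp.equiv 2 (H × H)).symm (T₁ y, T₂ x)) →
      (adjoint 𝕋).comp 𝕋 = diagOp ((adjoint T₂).comp T₂) ((adjoint T₁).comp T₁) := by
    intro T₁ T₂ 𝕋 h𝕋
    ext z
    refine ext_inner_right ℂ fun w => ?_
    have hz : 𝕋 z = (WithLp.equiv 2 (H × H)).symm (T₁ z.snd, T₂ z.fst) := h𝕋 z.fst z.snd
    have hw : 𝕋 w = (WithLp.equiv 2 (H × H)).symm (T₁ w.snd, T₂ w.fst) := h𝕋 w.fst w.snd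
    rw [ContinuousLinearMap.comp_apply, adjoint_inner_left, hz, hw, diagOp_apply]
    rw [WithLp.prod_inner_apply, WithLp.prod_inner_apply]
    simp only [WithLp.equiv_symm_apply, WithLp.ofLp_toLp, WithLp.ofLp_fst, WithLp.ofLp_snd]
    rw [ContinuousLinearMap.comp_apply, ContinuousLinearMap.comp_apply,
      adjoint_inner_left, adjoint_inner_left]
    ring
  have habs𝔸 : absOp 𝔸 = diagOp (absOp A₂) (absOp A₁) := by
    show cfc Real.sqrt ((adjoint 𝔸).comp 𝔸) = _
    rw [hAA A₁ A₂ 𝔸 h𝔸, diag_cfc Real.sqrt Real.continuous_sqrt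
      (isSelfAdjoint_adjoint_comp A₂) (isSelfAdjoint_adjoint_comp A₁)]
    rfl
  have habs𝔹 : absOp 𝔹 = diagOp (absOp B₂) (absOp B₁) := by
    show cfc Real.sqrt ((adjoint 𝔹).comp 𝔹) = _
    rw [hAA B₁ B₂ 𝔹 h𝔹, diag_cfc Real.sqrt Real.continuous_sqrt
      (isSelfAdjoint_adjoint_comp B₂) (isSelfAdjoint_adjoint_comp B₁)]
    rfl
  have hQ𝔸 : cfc (fun t : ℝ => t ^ r) (absOp 𝔸)
      = diagOp (cfc (fun t : ℝ => t ^ r) (absOp A₂)) (cfc (fun t : ℝ => t ^ r) (absOp A₁)) := by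
    rw [habs𝔸]
    exact diag_cfc _ (continuous_rpow_const hr0.le)
      (cfc_predicate Real.sqrt ((adjoint A₂).comp A₂))
      (cfc_predicate Real.sqrt ((adjoint A₁).comp A₁))
  have hQ𝔹 : cfc (fun t : ℝ => t ^ r) (absOp 𝔹)
      = diagOp (cfc (fun t : ℝ => t ^ r) (absOp B₂)) (cfc (fun t : ℝ => t ^ r) (absOp B₁)) := by
    rw [habs𝔹]
    exact diag_cfc _ (continuous_rpow_const hr0.le)
      (cfc_predicate Real.sqrt ((adjoint B₂).comp B₂))
      (cfc_predicate Real.sqrt ((adjoint B₁).comp B₁))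
  have hW : α • cfc (fun t : ℝ => t ^ r) (absOp 𝔸)
        + (1 - α) • cfc (fun t : ℝ => t ^ r) (absOp 𝔹) = diagOp M₂ M₁ := by
    rw [hQ𝔸, hQ𝔹, diagOp_smul, diagOp_smul, diagOp_add, hM₂, hM₁]
  -- the norm of 𝕐
  have hY : ‖𝕐‖ ≤ max ‖X₁‖ ‖X₂‖ := by
    refine opNorm_le_bound _ (le_max_iff.2 (Or.inl (norm_nonneg X₁))) fun z => ?_
    refine sq_le_mul_sq (le_max_iff.2 (Or.inl (norm_nonneg X₁))) (norm_nonneg z) ?_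
    have hz : 𝕐 z = (WithLp.equiv 2 (H × H)).symm (X₁ z.snd, X₂ z.fst) := h𝕐 z.fst z.snd
    have h1 : ‖𝕐 z‖ ^ 2 = ‖X₁ z.snd‖ ^ 2 + ‖X₂ z.fst‖ ^ 2 := by
      rw [hz, WithLp.prod_norm_sq_eq_of_L2]; rfl
    have h2 : ‖z‖ ^ 2 = ‖z.fst‖ ^ 2 + ‖z.snd‖ ^ 2 := WithLp.prod_norm_sq_eq_of_L2 z
    have h3 : ‖X₁ z.snd‖ ^ 2 ≤ (max ‖X₁‖ ‖X₂‖) ^ 2 * ‖z.snd‖ ^ 2 := by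
      rw [← mul_pow]
      exact pow_le_pow_left₀ (norm_nonneg _)
        ((X₁.le_opNorm z.snd).trans (by gcongr; exact le_max_left _ _)) 2
    have h4 : ‖X₂ z.fst‖ ^ 2 ≤ (max ‖X₁‖ ‖X₂‖) ^ 2 * ‖z.fst‖ ^ 2 := by
      rw [← mul_pow]
      exact pow_le_pow_left₀ (norm_nonneg _)
        ((X₂.le_opNorm z.fst).trans (by gcongr; exact le_max_right _ _)) 2
    rw [h1, h2]; nlinarith [h3, h4]
  have hYr : ‖𝕐‖ ^ r ≤ max (‖X₁‖ ^ r) (‖X₂‖ ^ r) := by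
    rcases le_total ‖X₁‖ ‖X₂‖ with h | h
    · exact (Real.rpow_le_rpow (norm_nonneg _) (hY.trans_eq (max_eq_right h)) hr0.le).trans
        (le_max_right _ _)
    · exact (Real.rpow_le_rpow (norm_nonneg _) (hY.trans_eq (max_eq_left h)) hr0.le).trans
        (le_max_left _ _)
  -- the key pointwise bound
  have key : ∀ z : WithLp 2 (H × H), ‖z‖ = 1 →
      ‖(inner ℂ ((cfc (fun t : ℝ => t ^ α) (absOp 𝔸) * 𝕐
          * cfc (fun t : ℝ => t ^ (1 - α)) (absOp 𝔹)) z) z : ℂ)‖ ^ r ≤ C := by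
    intro z hz
    set F := cfc (fun t : ℝ => t ^ α) (absOp 𝔸) with hF
    set G := cfc (fun t : ℝ => t ^ (1 - α)) (absOp 𝔹) with hG
    set Qa := cfc (fun t : ℝ => t ^ r) (absOp 𝔸) with hQa
    set Qb := cfc (fun t : ℝ => t ^ r) (absOp 𝔹) with hQb
    have hQa0 : 0 ≤ Qa :=
      cfc_nonneg (fun x hx =>
        Real.rpow_nonneg (spectrum_nonneg_of_nonneg (absOp_nonneg 𝔸) hx) r)
    have hQb0 : 0 ≤ Qb :=
      cfc_nonneg (fun x hx =>
        Real.rpow_nonneg (spectrum_nonneg_of_nonneg (absOp_nonneg 𝔹) hx) r)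
    set b := (inner ℂ (Qa z) z : ℂ).re with hb
    set a := (inner ℂ (Qb z) z : ℂ).re with ha
    have hb0 : 0 ≤ b := inner_re_nonneg_of_nonneg hQa0 z
    have ha0 : 0 ≤ a := inner_re_nonneg_of_nonneg hQb0 z
    have hFsa : IsSelfAdjoint F := cfc_predicate _ _
    have hinner : (inner ℂ ((F * 𝕐 * G) z) z : ℂ) = inner ℂ (𝕐 (G z)) (F z) := by
      have happly : (F * 𝕐 * G) z = F (𝕐 (G z)) := rfl
      rw [happly]
      conv_lhs => rw [← hFsa.adjoint_eq]
      rw [adjoint_inner_left]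
    have hF2 : ‖F z‖ ^ 2 ≤ b ^ (2 * α / r) :=
      cfc_rpow_norm_apply_sq_le (absOp 𝔸) (absOp_nonneg 𝔸) hα0 hα1 hr z hz
    have hG2 : ‖G z‖ ^ 2 ≤ a ^ (2 * (1 - α) / r) :=
      cfc_rpow_norm_apply_sq_le (absOp 𝔹) (absOp_nonneg 𝔹) (by linarith) (by linarith) hr z hz
    have sq_rpow : ∀ x : ℝ, 0 ≤ x → ((x ^ (2:ℕ) : ℝ)) ^ (r / 2) = x ^ r := by
      intro x hx
      rw [← Real.rpow_natCast x 2, ← Real.rpow_mul hx]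
      congr 1
      ring
    have hFr : ‖F z‖ ^ r ≤ b ^ α := by
      calc ‖F z‖ ^ r = (‖F z‖ ^ (2:ℕ)) ^ (r / 2) := (sq_rpow _ (norm_nonneg _)).symm
        _ ≤ (b ^ (2 * α / r)) ^ (r / 2) :=
            Real.rpow_le_rpow (by positivity) hF2 (by positivity)
        _ = b ^ α := by
            rw [← Real.rpow_mul hb0]
            congr 1
            field_simp
    have hGr : ‖G z‖ ^ r ≤ a ^ (1 - α) := by
      calc ‖G z‖ ^ r = (‖G z‖ ^ (2:ℕ)) ^ (r / 2) := (sq_rpow _ (norm_nonneg _)).symm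
        _ ≤ (a ^ (2 * (1 - α) / r)) ^ (r / 2) :=
            Real.rpow_le_rpow (by positivity) hG2 (by positivity)
        _ = a ^ (1 - α) := by
            rw [← Real.rpow_mul ha0]
            congr 1
            field_simp
    have hstep : ‖(inner ℂ ((F * 𝕐 * G) z) z : ℂ)‖ ≤ ‖𝕐‖ * ‖G z‖ * ‖F z‖ := by
      rw [hinner]
      calc ‖(inner ℂ (𝕐 (G z)) (F z) : ℂ)‖ ≤ ‖𝕐 (G z)‖ * ‖F z‖ := norm_inner_le_norm _ _
        _ ≤ ‖𝕐‖ * ‖G z‖ * ‖F z‖ := by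
            gcongr
            exact le_opNorm _ _
    have hmain : ‖(inner ℂ ((F * 𝕐 * G) z) z : ℂ)‖ ^ r ≤ ‖𝕐‖ ^ r * (α * b + (1 - α) * a) := by
      calc ‖(inner ℂ ((F * 𝕐 * G) z) z : ℂ)‖ ^ r ≤ (‖𝕐‖ * ‖G z‖ * ‖F z‖) ^ r :=
            Real.rpow_le_rpow (norm_nonneg _) hstep hr0.le
        _ = ‖𝕐‖ ^ r * (‖G z‖ ^ r * ‖F z‖ ^ r) := by
            rw [Real.mul_rpow (mul_nonneg (norm_nonneg _) (norm_nonneg _)) (norm_nonneg _),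
              Real.mul_rpow (norm_nonneg _) (norm_nonneg _)]
            ring
        _ ≤ ‖𝕐‖ ^ r * (a ^ (1 - α) * b ^ α) := by
            have h1 : ‖G z‖ ^ r * ‖F z‖ ^ r ≤ a ^ (1 - α) * b ^ α :=
              mul_le_mul hGr hFr (Real.rpow_nonneg (norm_nonneg _) r)
                (Real.rpow_nonneg ha0 _)
            exact mul_le_mul_of_nonneg_left h1 (Real.rpow_nonneg (norm_nonneg _) r)
        _ ≤ ‖𝕐‖ ^ r * (α * b + (1 - α) * a) := by
            have h2 : a ^ (1 - α) * b ^ α ≤ α * b + (1 - α) * a := by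
              have := Real.geom_mean_le_arith_mean2_weighted hα0 (by linarith : (0:ℝ) ≤ 1 - α)
                hb0 ha0 (by ring)
              calc a ^ (1 - α) * b ^ α = b ^ α * a ^ (1 - α) := by ring
                _ ≤ α * b + (1 - α) * a := this
            exact mul_le_mul_of_nonneg_left h2 (Real.rpow_nonneg (norm_nonneg _) r)
    have hWinner : (inner ℂ ((α • Qa + (1 - α) • Qb) z) z : ℂ).re = α * b + (1 - α) * a := by
      simp only [add_apply, smul_apply, inner_add_left, Complex.add_re]
      have e1 : (inner ℂ (α • Qa z) z : ℂ).re = α * b := by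
        rw [RCLike.real_smul_eq_coe_smul (K := ℂ), inner_smul_left]
        simp [hb, Complex.mul_re]
      have e2 : (inner ℂ ((1 - α) • Qb z) z : ℂ).re = (1 - α) * a := by
        rw [RCLike.real_smul_eq_coe_smul (K := ℂ), inner_smul_left]
        simp [ha, Complex.mul_re]
      rw [e1, e2]
    have hWle : (α * b + (1 - α) * a) ≤ max ‖M₂‖ ‖M₁‖ := by
      rw [← hWinner]
      have h1 : (inner ℂ ((α • Qa + (1 - α) • Qb) z) z : ℂ).re
          ≤ ‖α • Qa + (1 - α) • Qb‖ := by
        calc (inner ℂ ((α • Qa + (1 - α) • Qb) z) z : ℂ).re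
            ≤ ‖(inner ℂ ((α • Qa + (1 - α) • Qb) z) z : ℂ)‖ := Complex.re_le_norm _
          _ = ‖(inner ℂ ((α • Qa + (1 - α) • Qb) z) z : ℂ)‖ := rfl
          _ ≤ ‖(α • Qa + (1 - α) • Qb) z‖ * ‖z‖ := norm_inner_le_norm _ _
          _ ≤ (‖α • Qa + (1 - α) • Qb‖ * ‖z‖) * ‖z‖ :=
              mul_le_mul_of_nonneg_right (le_opNorm _ _) (norm_nonneg _)
          _ = ‖α • Qa + (1 - α) • Qb‖ := by rw [hz]; ring
      refine h1.trans ?_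
      rw [hQa, hQb] at *
      rw [hW]
      exact norm_diagOp_le _ _
    calc ‖(inner ℂ ((F * 𝕐 * G) z) z : ℂ)‖ ^ r ≤ ‖𝕐‖ ^ r * (α * b + (1 - α) * a) := hmain
      _ ≤ max (‖X₁‖ ^ r) (‖X₂‖ ^ r) * max ‖M₂‖ ‖M₁‖ := by
          exact mul_le_mul hYr hWle
            (add_nonneg (mul_nonneg hα0 hb0) (mul_nonneg (by linarith) ha0)) hXr0
  -- conclude via the supremum
  unfold numRad
  set T := cfc (fun t : ℝ => t ^ α) (absOp 𝔸) * 𝕐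
      * cfc (fun t : ℝ => t ^ (1 - α)) (absOp 𝔹) with hT
  set S := {t : ℝ | ∃ x : WithLp 2 (H × H), ‖x‖ = 1 ∧ t = ‖(inner ℂ (T x) x : ℂ)‖} with hS
  rcases Set.eq_empty_or_nonempty S with hSe | hSne
  · rw [hSe, Real.sSup_empty, Real.zero_rpow hr0.ne']
    exact hC0
  · have hub : ∀ t ∈ S, t ≤ C ^ (1 / r) := by
      rintro t ⟨x, hx, rfl⟩
      have h := key x hx
      have ht0 : (0:ℝ) ≤ ‖(inner ℂ (T x) x : ℂ)‖ := norm_nonneg _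
      calc ‖(inner ℂ (T x) x : ℂ)‖
          = (‖(inner ℂ (T x) x : ℂ)‖ ^ r) ^ (1 / r) := by
            rw [← Real.rpow_mul ht0, mul_one_div_cancel hr0.ne', Real.rpow_one]
        _ ≤ C ^ (1 / r) :=
            Real.rpow_le_rpow (Real.rpow_nonneg ht0 r) h (by positivity)
    have hsup_le : sSup S ≤ C ^ (1 / r) := csSup_le hSne hub
    have hsup0 : 0 ≤ sSup S := by
      obtain ⟨t, ht⟩ := hSne
      have ht0 : 0 ≤ t := by
        obtain ⟨x, hx, rfl⟩ := ht
        exact norm_nonneg _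
      exact ht0.trans (le_csSup ⟨C ^ (1 / r), hub⟩ ht)
    calc sSup S ^ r ≤ (C ^ (1 / r)) ^ r := Real.rpow_le_rpow hsup0 hsup_le hr0.le
      _ = C := by
          rw [← Real.rpow_mul hC0, one_div, inv_mul_cancel₀ hr0.ne', Real.rpow_one]
end
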